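/- arXiv:1806.05902 — 6 statements merged into one kernel-verified Lean document; each statement's English description precedes it below -/
import Mathlib

section
/- For every integer n ≥ 5, the commutator subgroup GVB_n' of the generalized virtual braid group GVB_n is generated by a set of at most 3n − 7 elements; i.e., there exists a subset S of GVB_n with cardinality at most 3n − 7 whose generated subgroup equals [GVB_n, GVB_n]. -/
namespace GenVirtBraid

/-- The free-group generator word for `σ_{i+1}` (0-indexed `i`). -/
def σw (n : ℕ) (i : Fin (n-1)) : FreeGroup (Fin (n-1) ⊕ Fin (n-1)) := FreeGroup.of (Sum.inl i)

/-- The free-group generator word for `ρ_{i+1}` (0-indexed `i`). -/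
def ρw (n : ℕ) (i : Fin (n-1)) : FreeGroup (Fin (n-1) ⊕ Fin (n-1)) := FreeGroup.of (Sum.inr i)

/-- Defining relators of the generalized virtual braid group `GVB_n`. -/
def gvbRels (n : ℕ) : Set (FreeGroup (Fin (n-1) ⊕ Fin (n-1))) :=
  {r | ∃ i j : Fin (n-1), ((i:ℕ)+1 < (j:ℕ) ∨ (j:ℕ)+1 < (i:ℕ)) ∧
      r = σw n i * σw n j * (σw n i)⁻¹ * (σw n j)⁻¹} ∪
  {r | ∃ i j : Fin (n-1), (j:ℕ) = (i:ℕ)+1 ∧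
      r = σw n i * σw n j * σw n i * (σw n j * σw n i * σw n j)⁻¹} ∪
  {r | ∃ i j : Fin (n-1), ((i:ℕ)+1 < (j:ℕ) ∨ (j:ℕ)+1 < (i:ℕ)) ∧
      r = ρw n i * ρw n j * (ρw n i)⁻¹ * (ρw n j)⁻¹} ∪
  {r | ∃ i j : Fin (n-1), (j:ℕ) = (i:ℕ)+1 ∧
      r = ρw n i * ρw n j * ρw n i * (ρw n j * ρw n i * ρw n j)⁻¹} ∪
  {r | ∃ i j : Fin (n-1), (j:ℕ) = (i:ℕ)+1 ∧
      r = ρw n i * σw n j * σw n i * (σw n j * σw n i * ρw n j)⁻¹} ∪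
  {r | ∃ i j : Fin (n-1), (j:ℕ) = (i:ℕ)+1 ∧
      r = ρw n j * σw n i * σw n j * (σw n i * σw n j * ρw n i)⁻¹} ∪
  {r | ∃ i j : Fin (n-1), ((i:ℕ)+1 < (j:ℕ) ∨ (j:ℕ)+1 < (i:ℕ)) ∧
      r = σw n i * ρw n j * (σw n i)⁻¹ * (ρw n j)⁻¹}

/-- The generalized virtual braid group `GVB_n` (Fang's presentation). -/
abbrev GVB (n : ℕ) := PresentedGroup (gvbRels n)

/-- The generator `σ_{i+1}` of `GVB_n` (0-indexed `i`). -/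
def σ (n : ℕ) (i : Fin (n-1)) : GVB n := PresentedGroup.of (Sum.inl i)

/-- The generator `ρ_{i+1}` of `GVB_n` (0-indexed `i`). -/
def ρ (n : ℕ) (i : Fin (n-1)) : GVB n := PresentedGroup.of (Sum.inr i)

end GenVirtBraid

namespace GVBAux
open GenVirtBraid
open scoped commutatorElement

variable {n : ℕ}

lemma rel_one {r : FreeGroup (Fin (n-1) ⊕ Fin (n-1))} (h : r ∈ gvbRels n) :
    PresentedGroup.mk (gvbRels n) r = 1 :=
  (QuotientGroup.eq_one_iff _).mpr (Subgroup.subset_normalClosure h)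

lemma σ_eq_mk (i : Fin (n-1)) : σ n i = PresentedGroup.mk (gvbRels n) (σw n i) := rfl
lemma ρ_eq_mk (i : Fin (n-1)) : ρ n i = PresentedGroup.mk (gvbRels n) (ρw n i) := rfl

/-- σ far commutation -/
lemma σ_comm (i j : Fin (n-1)) (h : (i:ℕ)+1 < (j:ℕ) ∨ (j:ℕ)+1 < (i:ℕ)) :
    σ n i * σ n j = σ n j * σ n i := by
  have h1 := rel_one (n := n)
    (r := σw n i * σw n j * (σw n i)⁻¹ * (σw n j)⁻¹)
    (Or.inl <| Or.inl <| Or.inl <| Or.inl <| Or.inl <| Or.inl ⟨i, j, h, rfl⟩)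
  simp only [map_mul, map_inv, ← σ_eq_mk] at h1
  have h2 : ⁅σ n i, σ n j⁆ = 1 := by rw [commutatorElement_def]; exact h1
  exact commutatorElement_eq_one_iff_mul_comm.mp h2

lemma σ_braid (i j : Fin (n-1)) (h : (j:ℕ) = (i:ℕ)+1) :
    σ n i * σ n j * σ n i = σ n j * σ n i * σ n j := by
  have h1 := rel_one (n := n)
    (r := σw n i * σw n j * σw n i * (σw n j * σw n i * σw n j)⁻¹)
    (Or.inl <| Or.inl <| Or.inl <| Or.inl <| Or.inl <| Or.inr ⟨i, j, h, rfl⟩)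
  simp only [map_mul, map_inv, ← σ_eq_mk] at h1
  rwa [mul_inv_eq_one] at h1

lemma ρ_comm (i j : Fin (n-1)) (h : (i:ℕ)+1 < (j:ℕ) ∨ (j:ℕ)+1 < (i:ℕ)) :
    ρ n i * ρ n j = ρ n j * ρ n i := by
  have h1 := rel_one (n := n)
    (r := ρw n i * ρw n j * (ρw n i)⁻¹ * (ρw n j)⁻¹)
    (Or.inl <| Or.inl <| Or.inl <| Or.inl <| Or.inr ⟨i, j, h, rfl⟩)
  simp only [map_mul, map_inv, ← ρ_eq_mk] at h1
  have h2 : ⁅ρ n i, ρ n j⁆ = 1 := by rw [commutatorElement_def]; exact h1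
  exact commutatorElement_eq_one_iff_mul_comm.mp h2

lemma ρ_braid (i j : Fin (n-1)) (h : (j:ℕ) = (i:ℕ)+1) :
    ρ n i * ρ n j * ρ n i = ρ n j * ρ n i * ρ n j := by
  have h1 := rel_one (n := n)
    (r := ρw n i * ρw n j * ρw n i * (ρw n j * ρw n i * ρw n j)⁻¹)
    (Or.inl <| Or.inl <| Or.inl <| Or.inr ⟨i, j, h, rfl⟩)
  simp only [map_mul, map_inv, ← ρ_eq_mk] at h1
  rwa [mul_inv_eq_one] at h1

lemma mix1 (i j : Fin (n-1)) (h : (j:ℕ) = (i:ℕ)+1) :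
    ρ n i * σ n j * σ n i = σ n j * σ n i * ρ n j := by
  have h1 := rel_one (n := n)
    (r := ρw n i * σw n j * σw n i * (σw n j * σw n i * ρw n j)⁻¹)
    (Or.inl <| Or.inl <| Or.inr ⟨i, j, h, rfl⟩)
  simp only [map_mul, map_inv, ← σ_eq_mk, ← ρ_eq_mk] at h1
  rwa [mul_inv_eq_one] at h1

lemma mix2 (i j : Fin (n-1)) (h : (j:ℕ) = (i:ℕ)+1) :
    ρ n j * σ n i * σ n j = σ n i * σ n j * ρ n i := by
  have h1 := rel_one (n := n)
    (r := ρw n j * σw n i * σw n j * (σw n i * σw n j * ρw n i)⁻¹)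
    (Or.inl <| Or.inr ⟨i, j, h, rfl⟩)
  simp only [map_mul, map_inv, ← σ_eq_mk, ← ρ_eq_mk] at h1
  rwa [mul_inv_eq_one] at h1

lemma σρ_comm (i j : Fin (n-1)) (h : (i:ℕ)+1 < (j:ℕ) ∨ (j:ℕ)+1 < (i:ℕ)) :
    σ n i * ρ n j = ρ n j * σ n i := by
  have h1 := rel_one (n := n)
    (r := σw n i * ρw n j * (σw n i)⁻¹ * (ρw n j)⁻¹)
    (Or.inr ⟨i, j, h, rfl⟩)
  simp only [map_mul, map_inv, ← σ_eq_mk, ← ρ_eq_mk] at h1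
  have h2 : ⁅σ n i, ρ n j⁆ = 1 := by rw [commutatorElement_def]; exact h1
  exact commutatorElement_eq_one_iff_mul_comm.mp h2


/-! ### Nat-indexed generators and derived identities -/

variable (n) in
/-- σ-generator with ℕ index (junk value 1 out of range). -/
def es (k : ℕ) : GVB n := if h : k < n - 1 then σ n ⟨k, h⟩ else 1

variable (n) in
/-- ρ-generator with ℕ index (junk value 1 out of range). -/
def er (k : ℕ) : GVB n := if h : k < n - 1 then ρ n ⟨k, h⟩ else 1

lemma es_def {k : ℕ} (h : k < n - 1) : es n k = σ n ⟨k, h⟩ := dif_pos h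
lemma er_def {k : ℕ} (h : k < n - 1) : er n k = ρ n ⟨k, h⟩ := dif_pos h

lemma comm_ss {k l : ℕ} (hk : k < n-1) (hl : l < n-1) (h : k+2 ≤ l ∨ l+2 ≤ k) :
    es n k * es n l = es n l * es n k := by
  rw [es_def hk, es_def hl]
  refine σ_comm _ _ ?_
  rcases h with h | h
  · left; simpa using (show k+1 < l by omega)
  · right; simpa using (show l+1 < k by omega)

lemma comm_rr {k l : ℕ} (hk : k < n-1) (hl : l < n-1) (h : k+2 ≤ l ∨ l+2 ≤ k) :
    er n k * er n l = er n l * er n k := by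
  rw [er_def hk, er_def hl]
  refine ρ_comm _ _ ?_
  rcases h with h | h
  · left; simpa using (show k+1 < l by omega)
  · right; simpa using (show l+1 < k by omega)

lemma comm_sr {k l : ℕ} (hk : k < n-1) (hl : l < n-1) (h : k+2 ≤ l ∨ l+2 ≤ k) :
    es n k * er n l = er n l * es n k := by
  rw [es_def hk, er_def hl]
  refine σρ_comm _ _ ?_
  rcases h with h | h
  · left; simpa using (show k+1 < l by omega)
  · right; simpa using (show l+1 < k by omega)

lemma braid_s {k : ℕ} (h : k+1 < n-1) :
    es n k * es n (k+1) * es n k = es n (k+1) * es n k * es n (k+1) := by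
  rw [es_def (Nat.lt_of_succ_lt h), es_def h]
  exact σ_braid _ _ (by simp)

lemma braid_r {k : ℕ} (h : k+1 < n-1) :
    er n k * er n (k+1) * er n k = er n (k+1) * er n k * er n (k+1) := by
  rw [er_def (Nat.lt_of_succ_lt h), er_def h]
  exact ρ_braid _ _ (by simp)

lemma mix2n {k : ℕ} (h : k+1 < n-1) :
    er n (k+1) * es n k * es n (k+1) = es n k * es n (k+1) * er n k := by
  rw [er_def (Nat.lt_of_succ_lt h), er_def h, es_def (Nat.lt_of_succ_lt h), es_def h]
  exact mix2 _ _ (by simp)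

/-! ### Generic conjugation helpers -/

section Helpers
variable {G : Type*} [Group G]

lemma conj_mul' {w x y a b : G} (hx : w*x*w⁻¹ = a) (hy : w*y*w⁻¹ = b) :
    w*(x*y)*w⁻¹ = a*b := by rw [← hx, ← hy]; group

lemma conj_inv' {w x a : G} (hx : w*x*w⁻¹ = a) : w*x⁻¹*w⁻¹ = a⁻¹ := by
  rw [← hx]; group

lemma conj_zpow' {w x a : G} (hx : w*x*w⁻¹ = a) (t : ℤ) : w*x^t*w⁻¹ = a^t := by
  rw [← hx, conj_zpow]

lemma conj_of_comm {w x : G} (h : w*x = x*w) : w*x*w⁻¹ = x := by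
  rw [h]; group

end Helpers

/-- Conjugation by Π' = es k * es (k+1) sends es k to es (k+1). -/
lemma conjPi_s {k : ℕ} (h : k+1 < n-1) :
    (es n k * es n (k+1)) * es n k * (es n k * es n (k+1))⁻¹ = es n (k+1) := by
  have hb := braid_s (n := n) h
  have h1 : (es n k * es n (k+1)) * es n k * (es n k * es n (k+1))⁻¹
      = (es n k * es n (k+1) * es n k) * ((es n k * es n (k+1))⁻¹) := by group
  rw [h1, hb]; group

/-- Conjugation by Π' = es k * es (k+1) sends er k to er (k+1). -/
lemma conjPi_r {k : ℕ} (h : k+1 < n-1) :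
    (es n k * es n (k+1)) * er n k * (es n k * es n (k+1))⁻¹ = er n (k+1) := by
  have hb := mix2n (n := n) h
  have h1 : (es n k * es n (k+1)) * er n k * (es n k * es n (k+1))⁻¹
      = (es n k * es n (k+1) * er n k) * ((es n k * es n (k+1))⁻¹) := by group
  rw [h1, ← hb]; group


/-! ### Commute versions and more helpers -/

lemma cSS {k l : ℕ} (hk : k < n-1) (hl : l < n-1) (h : k+2 ≤ l ∨ l+2 ≤ k) :
    Commute (es n k) (es n l) := comm_ss hk hl h

lemma cRR {k l : ℕ} (hk : k < n-1) (hl : l < n-1) (h : k+2 ≤ l ∨ l+2 ≤ k) :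
    Commute (er n k) (er n l) := comm_rr hk hl h

lemma cSR {k l : ℕ} (hk : k < n-1) (hl : l < n-1) (h : k+2 ≤ l ∨ l+2 ≤ k) :
    Commute (es n k) (er n l) := comm_sr hk hl h

lemma conj_eq_of_commute {G : Type*} [Group G] {w x : G} (h : Commute w x) :
    w * x * w⁻¹ = x := by rw [h.eq]; group

/-! ### Exponent homomorphisms -/

variable (n) in
/-- Total σ-exponent homomorphism. -/
def expS : GVB n →* Multiplicative ℤ :=
  PresentedGroup.toGroup (f := fun x => Sum.casesOn x
      (fun _ => Multiplicative.ofAdd (1:ℤ)) (fun _ => 1)) (by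
    rintro r (((((( ⟨i,j,hc,rfl⟩ | ⟨i,j,hc,rfl⟩ ) | ⟨i,j,hc,rfl⟩ ) | ⟨i,j,hc,rfl⟩ ) |
        ⟨i,j,hc,rfl⟩ ) | ⟨i,j,hc,rfl⟩ ) | ⟨i,j,hc,rfl⟩ ) <;>
      simp only [σw, ρw, map_mul, map_inv, FreeGroup.lift_apply_of] <;> group)

variable (n) in
/-- Total ρ-exponent homomorphism. -/
def expR : GVB n →* Multiplicative ℤ :=
  PresentedGroup.toGroup (f := fun x => Sum.casesOn x
      (fun _ => 1) (fun _ => Multiplicative.ofAdd (1:ℤ))) (by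
    rintro r (((((( ⟨i,j,hc,rfl⟩ | ⟨i,j,hc,rfl⟩ ) | ⟨i,j,hc,rfl⟩ ) | ⟨i,j,hc,rfl⟩ ) |
        ⟨i,j,hc,rfl⟩ ) | ⟨i,j,hc,rfl⟩ ) | ⟨i,j,hc,rfl⟩ ) <;>
      simp only [σw, ρw, map_mul, map_inv, FreeGroup.lift_apply_of] <;> group)

@[simp] lemma expS_σ (i : Fin (n-1)) : expS n (σ n i) = Multiplicative.ofAdd (1:ℤ) :=
  PresentedGroup.toGroup.of _
@[simp] lemma expS_ρ (i : Fin (n-1)) : expS n (ρ n i) = 1 :=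
  PresentedGroup.toGroup.of _
@[simp] lemma expR_σ (i : Fin (n-1)) : expR n (σ n i) = 1 :=
  PresentedGroup.toGroup.of _
@[simp] lemma expR_ρ (i : Fin (n-1)) : expR n (ρ n i) = Multiplicative.ofAdd (1:ℤ) :=
  PresentedGroup.toGroup.of _


/-! ### The subgroups -/

variable (n) in
/-- The σ-letters subgroup. -/
def Bs : Subgroup (GVB n) := Subgroup.closure (Set.range (σ n))

variable (n) in
/-- The ρ-letters subgroup. -/
def Br : Subgroup (GVB n) := Subgroup.closure (Set.range (ρ n))

variable (n) in
/-- u-generators. -/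
def uS (k : ℕ) : GVB n := es n k * (es n 0)⁻¹

variable (n) in
/-- v-generators. -/
def uR (k : ℕ) : GVB n := er n k * (er n 0)⁻¹

variable (n) in
/-- the mixed seed. -/
def c0 : GVB n := es n 0 * er n 0 * (es n 0)⁻¹ * (er n 0)⁻¹

variable (n) in
def Ns : Subgroup (GVB n) := Subgroup.closure (uS n '' {k | k < n-1})

variable (n) in
def Nr : Subgroup (GVB n) := Subgroup.closure (uR n '' {k | k < n-1})

variable (n) in
/-- Generating set of the commutator subgroup. -/
def Sset : Set (GVB n) := (uS n '' {k | k < n-1}) ∪ (uR n '' {k | k < n-1}) ∪ {c0 n}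

variable (n) in
def NN : Subgroup (GVB n) := Subgroup.closure (Sset n)

lemma uS_mem_Ns {k : ℕ} (hk : k < n-1) : uS n k ∈ Ns n :=
  Subgroup.subset_closure ⟨k, hk, rfl⟩

lemma uR_mem_Nr {k : ℕ} (hk : k < n-1) : uR n k ∈ Nr n :=
  Subgroup.subset_closure ⟨k, hk, rfl⟩

lemma Ns_le_NN : Ns n ≤ NN n :=
  (Subgroup.closure_le _).mpr (fun x hx => Subgroup.subset_closure (Or.inl (Or.inl hx)))

lemma Nr_le_NN : Nr n ≤ NN n :=
  (Subgroup.closure_le _).mpr (fun x hx => Subgroup.subset_closure (Or.inl (Or.inr hx)))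

lemma c0_mem_NN : c0 n ∈ NN n := Subgroup.subset_closure (Or.inr rfl)

lemma uS_mem_NN {k : ℕ} (hk : k < n-1) : uS n k ∈ NN n := Ns_le_NN (uS_mem_Ns hk)
lemma uR_mem_NN {k : ℕ} (hk : k < n-1) : uR n k ∈ NN n := Nr_le_NN (uR_mem_Nr hk)

/-- conjugation transfer into a subgroup along a generating set -/
lemma conj_closure_mem {G : Type*} [Group G] (g : G) (T : Set G) (N : Subgroup G)
    (h : ∀ x ∈ T, g * x * g⁻¹ ∈ N) : ∀ x ∈ Subgroup.closure T, g * x * g⁻¹ ∈ N := by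
  intro x hx
  have h2 : Subgroup.closure T ≤ N.comap (MulAut.conj g).toMonoidHom :=
    (Subgroup.closure_le _).mpr (fun y hy => by simpa [Subgroup.mem_comap] using h y hy)
  simpa using h2 hx

/-! ### σ-side basics -/

section Sigma
variable (hm : 4 ≤ n - 1)
include hm

lemma lt4 (k : ℕ) (h : k < 4) : k < n - 1 := lt_of_lt_of_le h hm

/-- `es 1⁻¹ * es 0 ∈ Ns`. -/
lemma J_eq : (es n 1)⁻¹ * es n 0 = uS n 3 * (uS n 1)⁻¹ * (uS n 3)⁻¹ := by
  have c13 := (cSS (n := n) (lt4 hm 1 (by norm_num)) (lt4 hm 3 (by norm_num))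
    (by left; norm_num)).inv_left.eq
  have c03 := (cSS (n := n) (lt4 hm 0 (by norm_num)) (lt4 hm 3 (by norm_num))
    (by left; norm_num)).eq
  unfold uS
  -- RHS = es3 * es0⁻¹ * es0 * es1⁻¹ * es0 * es3⁻¹
  have h1 : es n 3 * (es n 0)⁻¹ * (es n 1 * (es n 0)⁻¹)⁻¹ * (es n 3 * (es n 0)⁻¹)⁻¹
      = es n 3 * (es n 1)⁻¹ * (es n 0 * (es n 3)⁻¹) := by group
  rw [h1]
  have h2 : es n 3 * (es n 1)⁻¹ = (es n 1)⁻¹ * es n 3 := by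
    rw [← c13]
  rw [h2]
  have h3 : es n 0 * (es n 3)⁻¹ = (es n 3)⁻¹ * es n 0 := by
    have := (cSS (n := n) (lt4 hm 0 (by norm_num)) (lt4 hm 3 (by norm_num))
      (by left; norm_num)).inv_right.eq
    rw [this]
  rw [h3]
  group

lemma J_mem : (es n 1)⁻¹ * es n 0 ∈ Ns n := by
  rw [J_eq hm]
  exact mul_mem (mul_mem (uS_mem_Ns (lt4 hm 3 (by norm_num)))
    (inv_mem (uS_mem_Ns (lt4 hm 1 (by norm_num))))) (inv_mem (uS_mem_Ns (lt4 hm 3 (by norm_num))))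

/-- one-step conjugation of Ns generators by es0. -/
lemma conj_es0_uS {k : ℕ} (hk : k < n-1) : es n 0 * uS n k * (es n 0)⁻¹ ∈ Ns n := by
  rcases Nat.lt_or_ge k 2 with hk2 | hk2
  · interval_cases k
    · -- k = 0 : uS 0 = 1
      have : uS n 0 = 1 := by unfold uS; group
      rw [this]
      simpa using (Ns n).one_mem
    · -- k = 1
      have hb := braid_s (n := n) (k := 0) (lt4 hm 1 (by norm_num))
      have key : es n 0 * uS n 1 * (es n 0)⁻¹ = ((es n 1)⁻¹ * es n 0) * uS n 1 := by
        unfold uS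
        have h1 : ((es n 1)⁻¹ * es n 0) * (es n 1 * (es n 0)⁻¹)
            = (es n 1)⁻¹ * (es n 0 * es n 1 * es n 0) * (es n 0)⁻¹ * (es n 0)⁻¹ := by group
        rw [h1, hb]
        group
      rw [key]
      exact mul_mem (J_mem hm) (uS_mem_Ns hk)
  · -- k ≥ 2 : commutes
    have hc : Commute (es n 0) (uS n k) := by
      have c1 := cSS (n := n) (lt4 hm 0 (by norm_num)) hk (by left; omega)
      exact (c1.mul_right (Commute.refl _).inv_right)
    rw [conj_eq_of_commute hc]
    exact uS_mem_Ns hk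

lemma conj_es0_inv_uS {k : ℕ} (hk : k < n-1) : (es n 0)⁻¹ * uS n k * es n 0 ∈ Ns n := by
  rcases Nat.lt_or_ge k 2 with hk2 | hk2
  · interval_cases k
    · have : uS n 0 = 1 := by unfold uS; group
      rw [this]
      simpa using (Ns n).one_mem
    · -- (es0)⁻¹ * (es1 es0⁻¹) * es0 = es0⁻¹ es1 = ((es1)⁻¹ es0)⁻¹
      have key : (es n 0)⁻¹ * uS n 1 * es n 0 = ((es n 1)⁻¹ * es n 0)⁻¹ := by
        unfold uS; group
      rw [key]
      exact inv_mem (J_mem hm)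
  · have hc : Commute ((es n 0)⁻¹) (uS n k) := by
      have c1 := cSS (n := n) (lt4 hm 0 (by norm_num)) hk (by left; omega)
      exact (c1.mul_right (Commute.refl _).inv_right).inv_left
    have : (es n 0)⁻¹ * uS n k * ((es n 0)⁻¹)⁻¹ = uS n k := conj_eq_of_commute hc
    rw [inv_inv] at this
    rw [this]
    exact uS_mem_Ns hk

lemma conj_es0_Ns {x : GVB n} (hx : x ∈ Ns n) : es n 0 * x * (es n 0)⁻¹ ∈ Ns n := by
  refine conj_closure_mem _ _ _ ?_ x hx
  rintro y ⟨k, hk, rfl⟩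
  exact conj_es0_uS hm hk

lemma conj_es0_inv_Ns {x : GVB n} (hx : x ∈ Ns n) : (es n 0)⁻¹ * x * es n 0 ∈ Ns n := by
  have := conj_closure_mem ((es n 0)⁻¹) (uS n '' {k | k < n-1}) (Ns n) ?_ x hx
  · simpa using this
  rintro y ⟨k, hk, rfl⟩
  have := conj_es0_inv_uS hm hk
  simpa using this

lemma conj_es0_zpow_Ns (p : ℤ) {x : GVB n} (hx : x ∈ Ns n) :
    (es n 0)^p * x * (es n 0)^(-p) ∈ Ns n := by
  induction p using Int.induction_on with
  | zero => simpa using hx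
  | succ q ih =>
      have h1 : (es n 0)^((q:ℤ)+1) * x * (es n 0)^(-((q:ℤ)+1))
          = es n 0 * ((es n 0)^(q:ℤ) * x * (es n 0)^(-(q:ℤ))) * (es n 0)⁻¹ := by
        group
      rw [h1]
      exact conj_es0_Ns hm ih
  | pred q ih =>
      have h1 : (es n 0)^(-(q:ℤ)-1) * x * (es n 0)^(-(-(q:ℤ)-1))
          = (es n 0)⁻¹ * ((es n 0)^(-(q:ℤ)) * x * (es n 0)^(-(-(q:ℤ)))) * es n 0 := by
        group
      rw [h1]
      exact conj_es0_inv_Ns hm ih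

end Sigma


/-! ### ρ-side basics (mirror) -/

section Rho
variable (hm : 4 ≤ n - 1)
include hm

lemma Jr_eq : (er n 1)⁻¹ * er n 0 = uR n 3 * (uR n 1)⁻¹ * (uR n 3)⁻¹ := by
  have c13 := (cRR (n := n) (lt4 hm 1 (by norm_num)) (lt4 hm 3 (by norm_num))
    (by left; norm_num)).inv_left.eq
  unfold uR
  have h1 : er n 3 * (er n 0)⁻¹ * (er n 1 * (er n 0)⁻¹)⁻¹ * (er n 3 * (er n 0)⁻¹)⁻¹
      = er n 3 * (er n 1)⁻¹ * (er n 0 * (er n 3)⁻¹) := by group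
  rw [h1]
  have h2 : er n 3 * (er n 1)⁻¹ = (er n 1)⁻¹ * er n 3 := by rw [← c13]
  rw [h2]
  have h3 : er n 0 * (er n 3)⁻¹ = (er n 3)⁻¹ * er n 0 := by
    have := (cRR (n := n) (lt4 hm 0 (by norm_num)) (lt4 hm 3 (by norm_num))
      (by left; norm_num)).inv_right.eq
    rw [this]
  rw [h3]
  group

lemma Jr_mem : (er n 1)⁻¹ * er n 0 ∈ Nr n := by
  rw [Jr_eq hm]
  exact mul_mem (mul_mem (uR_mem_Nr (lt4 hm 3 (by norm_num)))
    (inv_mem (uR_mem_Nr (lt4 hm 1 (by norm_num))))) (inv_mem (uR_mem_Nr (lt4 hm 3 (by norm_num))))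

lemma conj_er0_uR {k : ℕ} (hk : k < n-1) : er n 0 * uR n k * (er n 0)⁻¹ ∈ Nr n := by
  rcases Nat.lt_or_ge k 2 with hk2 | hk2
  · interval_cases k
    · have : uR n 0 = 1 := by unfold uR; group
      rw [this]
      simpa using (Nr n).one_mem
    · have hb := braid_r (n := n) (k := 0) (lt4 hm 1 (by norm_num))
      have key : er n 0 * uR n 1 * (er n 0)⁻¹ = ((er n 1)⁻¹ * er n 0) * uR n 1 := by
        unfold uR
        have h1 : ((er n 1)⁻¹ * er n 0) * (er n 1 * (er n 0)⁻¹)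
            = (er n 1)⁻¹ * (er n 0 * er n 1 * er n 0) * (er n 0)⁻¹ * (er n 0)⁻¹ := by group
        rw [h1, hb]
        group
      rw [key]
      exact mul_mem (Jr_mem hm) (uR_mem_Nr hk)
  · have hc : Commute (er n 0) (uR n k) := by
      have c1 := cRR (n := n) (lt4 hm 0 (by norm_num)) hk (by left; omega)
      exact (c1.mul_right (Commute.refl _).inv_right)
    rw [conj_eq_of_commute hc]
    exact uR_mem_Nr hk

lemma conj_er0_inv_uR {k : ℕ} (hk : k < n-1) : (er n 0)⁻¹ * uR n k * er n 0 ∈ Nr n := by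
  rcases Nat.lt_or_ge k 2 with hk2 | hk2
  · interval_cases k
    · have : uR n 0 = 1 := by unfold uR; group
      rw [this]
      simpa using (Nr n).one_mem
    · have key : (er n 0)⁻¹ * uR n 1 * er n 0 = ((er n 1)⁻¹ * er n 0)⁻¹ := by
        unfold uR; group
      rw [key]
      exact inv_mem (Jr_mem hm)
  · have hc : Commute ((er n 0)⁻¹) (uR n k) := by
      have c1 := cRR (n := n) (lt4 hm 0 (by norm_num)) hk (by left; omega)
      exact (c1.mul_right (Commute.refl _).inv_right).inv_left
    have : (er n 0)⁻¹ * uR n k * ((er n 0)⁻¹)⁻¹ = uR n k := conj_eq_of_commute hc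
    rw [inv_inv] at this
    rw [this]
    exact uR_mem_Nr hk

lemma conj_er0_Nr {x : GVB n} (hx : x ∈ Nr n) : er n 0 * x * (er n 0)⁻¹ ∈ Nr n := by
  refine conj_closure_mem _ _ _ ?_ x hx
  rintro y ⟨k, hk, rfl⟩
  exact conj_er0_uR hm hk

lemma conj_er0_inv_Nr {x : GVB n} (hx : x ∈ Nr n) : (er n 0)⁻¹ * x * er n 0 ∈ Nr n := by
  have := conj_closure_mem ((er n 0)⁻¹) (uR n '' {k | k < n-1}) (Nr n) ?_ x hx
  · simpa using this
  rintro y ⟨k, hk, rfl⟩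
  have := conj_er0_inv_uR hm hk
  simpa using this

lemma conj_er0_zpow_Nr (p : ℤ) {x : GVB n} (hx : x ∈ Nr n) :
    (er n 0)^p * x * (er n 0)^(-p) ∈ Nr n := by
  induction p using Int.induction_on with
  | zero => simpa using hx
  | succ q ih =>
      have h1 : (er n 0)^((q:ℤ)+1) * x * (er n 0)^(-((q:ℤ)+1))
          = er n 0 * ((er n 0)^(q:ℤ) * x * (er n 0)^(-(q:ℤ))) * (er n 0)⁻¹ := by
        group
      rw [h1]
      exact conj_er0_Nr hm ih
  | pred q ih =>
      have h1 : (er n 0)^(-(q:ℤ)-1) * x * (er n 0)^(-(-(q:ℤ)-1))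
          = (er n 0)⁻¹ * ((er n 0)^(-(q:ℤ)) * x * (er n 0)^(-(-(q:ℤ)))) * er n 0 := by
        group
      rw [h1]
      exact conj_er0_inv_Nr hm ih

end Rho

/-! ### word decomposition lemmas -/

lemma σ_mem_Bs (i : Fin (n-1)) : σ n i ∈ Bs n := Subgroup.subset_closure ⟨i, rfl⟩
lemma ρ_mem_Br (i : Fin (n-1)) : ρ n i ∈ Br n := Subgroup.subset_closure ⟨i, rfl⟩

lemma es_mem_Bs {k : ℕ} (hk : k < n-1) : es n k ∈ Bs n := by
  rw [es_def hk]; exact σ_mem_Bs _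
lemma er_mem_Br {k : ℕ} (hk : k < n-1) : er n k ∈ Br n := by
  rw [er_def hk]; exact ρ_mem_Br _

lemma Bs_decomp (hm : 4 ≤ n - 1) {w : GVB n} (hw : w ∈ Bs n) :
    w * (es n 0)^(-(expS n w).toAdd) ∈ Ns n := by
  induction hw using Subgroup.closure_induction with
  | mem x hx =>
      obtain ⟨i, rfl⟩ := hx
      have h1 : (expS n (σ n i)).toAdd = 1 := by simp
      rw [h1]
      have h2 : σ n i * (es n 0)^(-(1:ℤ)) = uS n i.val := by
        rw [zpow_neg_one]
        unfold uS
        rw [es_def i.isLt, Fin.eta]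
      rw [h2]
      exact uS_mem_Ns i.isLt
  | one => simpa using (Ns n).one_mem
  | mul x y hx hy ihx ihy =>
      have hE : (expS n (x*y)).toAdd = (expS n x).toAdd + (expS n y).toAdd := by
        rw [map_mul]; rfl
      rw [hE]
      have hid : x*y*(es n 0)^(-((expS n x).toAdd + (expS n y).toAdd))
          = (x*(es n 0)^(-(expS n x).toAdd)) *
            ((es n 0)^((expS n x).toAdd) * (y*(es n 0)^(-(expS n y).toAdd)) *
              (es n 0)^(-(expS n x).toAdd)) := by
        group
      rw [hid]
      exact mul_mem ihx (conj_es0_zpow_Ns hm _ ihy)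
  | inv x hx ihx =>
      have hE : (expS n x⁻¹).toAdd = -(expS n x).toAdd := by
        rw [map_inv]; rfl
      rw [hE]
      have hid : x⁻¹*(es n 0)^(-(-(expS n x).toAdd))
          = (es n 0)^(-(expS n x).toAdd) * (x*(es n 0)^(-(expS n x).toAdd))⁻¹ *
            (es n 0)^(-(-(expS n x).toAdd)) := by
        group
      rw [hid]
      have := conj_es0_zpow_Ns hm (-(expS n x).toAdd) (inv_mem ihx)
      simpa using this

lemma Br_decomp (hm : 4 ≤ n - 1) {w : GVB n} (hw : w ∈ Br n) :
    w * (er n 0)^(-(expR n w).toAdd) ∈ Nr n := by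
  induction hw using Subgroup.closure_induction with
  | mem x hx =>
      obtain ⟨i, rfl⟩ := hx
      have h1 : (expR n (ρ n i)).toAdd = 1 := by simp
      rw [h1]
      have h2 : ρ n i * (er n 0)^(-(1:ℤ)) = uR n i.val := by
        rw [zpow_neg_one]
        unfold uR
        rw [er_def i.isLt, Fin.eta]
      rw [h2]
      exact uR_mem_Nr i.isLt
  | one => simpa using (Nr n).one_mem
  | mul x y hx hy ihx ihy =>
      have hE : (expR n (x*y)).toAdd = (expR n x).toAdd + (expR n y).toAdd := by
        rw [map_mul]; rfl
      rw [hE]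
      have hid : x*y*(er n 0)^(-((expR n x).toAdd + (expR n y).toAdd))
          = (x*(er n 0)^(-(expR n x).toAdd)) *
            ((er n 0)^((expR n x).toAdd) * (y*(er n 0)^(-(expR n y).toAdd)) *
              (er n 0)^(-(expR n x).toAdd)) := by
        group
      rw [hid]
      exact mul_mem ihx (conj_er0_zpow_Nr hm _ ihy)
  | inv x hx ihx =>
      have hE : (expR n x⁻¹).toAdd = -(expR n x).toAdd := by
        rw [map_inv]; rfl
      rw [hE]
      have hid : x⁻¹*(er n 0)^(-(-(expR n x).toAdd))
          = (er n 0)^(-(expR n x).toAdd) * (x*(er n 0)^(-(expR n x).toAdd))⁻¹ *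
            (er n 0)^(-(-(expR n x).toAdd)) := by
        group
      rw [hid]
      have := conj_er0_zpow_Nr hm (-(expR n x).toAdd) (inv_mem ihx)
      simpa using this

/-- A σ-word with zero σ-exponent lies in Ns. -/
lemma mem_Ns_of (hm : 4 ≤ n - 1) {w : GVB n} (hw : w ∈ Bs n) (h : expS n w = 1) :
    w ∈ Ns n := by
  have := Bs_decomp hm hw
  rw [h] at this
  simpa using this

lemma mem_Nr_of (hm : 4 ≤ n - 1) {w : GVB n} (hw : w ∈ Br n) (h : expR n w = 1) :
    w ∈ Nr n := by
  have := Br_decomp hm hw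
  rw [h] at this
  simpa using this


/-! ### Diagonal atoms -/

variable (n) in
/-- diagonal atom ⟨r_k, s_k⟩ -/
def atS (k : ℕ) : GVB n := er n k * es n k * (er n k)⁻¹ * (es n k)⁻¹

/-- conjugation of a member by a member -/
lemma conjN {G : Type*} [Group G] {N : Subgroup G} {a x : G} (ha : a ∈ N) (hx : x ∈ N) :
    a * x * a⁻¹ ∈ N := mul_mem (mul_mem ha hx) (inv_mem ha)

lemma atS_zero_mem : atS n 0 ∈ NN n := by
  have h : atS n 0 = (c0 n)⁻¹ := by unfold atS c0; group
  rw [h]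
  exact inv_mem c0_mem_NN

lemma expS_es {k : ℕ} (hk : k < n-1) : expS n (es n k) = Multiplicative.ofAdd (1:ℤ) := by
  rw [es_def hk]; simp

lemma expS_er {k : ℕ} (hk : k < n-1) : expS n (er n k) = 1 := by
  rw [er_def hk]; simp

lemma expR_es {k : ℕ} (hk : k < n-1) : expR n (es n k) = 1 := by
  rw [es_def hk]; simp

lemma expR_er {k : ℕ} (hk : k < n-1) : expR n (er n k) = Multiplicative.ofAdd (1:ℤ) := by
  rw [er_def hk]; simp

section Diag
variable (hm : 4 ≤ n - 1)
include hm

/-- membership of explicit zero-exponent σ-words in Ns ⊆ NN, helper -/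
lemma zexpS_mem {w : GVB n} (hw : w ∈ Bs n) (h : expS n w = 1) : w ∈ NN n :=
  Ns_le_NN (mem_Ns_of hm hw h)

lemma zexpR_mem {w : GVB n} (hw : w ∈ Br n) (h : expR n w = 1) : w ∈ NN n :=
  Nr_le_NN (mem_Nr_of hm hw h)

lemma diag_mem : ∀ k, k < n-1 → atS n k ∈ NN n := by
  intro k hk
  induction k with
  | zero => exact atS_zero_mem
  | succ k ih =>
    have hk1 : k < n - 1 := Nat.lt_of_succ_lt hk
    have ihk := ih hk1
    obtain ⟨f, hfar1, hflt⟩ : ∃ f, (f+2 ≤ k ∨ k+2 ≤ f) ∧ f < n-1 := by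
      rcases Nat.lt_or_ge (k+2) (n-1) with h | h
      · exact ⟨k+2, Or.inr (by omega), h⟩
      · exact ⟨k-2, Or.inl (by omega), by omega⟩
    set P : GVB n := es n k * es n (k+1) with hP
    set A : GVB n := P * (es n f)^(-2 : ℤ) with hA
    have hAmem : A ∈ NN n := by
      refine zexpS_mem hm ?_ ?_
      · exact mul_mem (mul_mem (es_mem_Bs hk1) (es_mem_Bs hk)) (zpow_mem (es_mem_Bs hflt) _)
      · rw [hA, hP, map_mul, map_mul, map_zpow, expS_es hk1, expS_es hk, expS_es hflt]
        rw [← ofAdd_zsmul]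
        rw [← ofAdd_add, ← ofAdd_add]
        norm_num
    have cs : Commute (es n f) (es n k) := cSS hflt hk1 hfar1
    have cr : Commute (es n f) (er n k) := cSR hflt hk1 hfar1
    have hc1 : Commute (es n f) (atS n k) :=
      ((cr.mul_right cs).mul_right cr.inv_right).mul_right cs.inv_right
    have hstep : A * atS n k * A⁻¹ = atS n (k+1) := by
      have hcz : Commute ((es n f)^(-2:ℤ)) (atS n k) := hc1.zpow_left _
      have hmid : (es n f)^(-2:ℤ) * atS n k * ((es n f)^(-2:ℤ))⁻¹ = atS n k :=
        conj_eq_of_commute hcz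
      have h2 : A * atS n k * A⁻¹
          = P * ((es n f)^(-2:ℤ) * atS n k * ((es n f)^(-2:ℤ))⁻¹) * P⁻¹ := by
        rw [hA]; group
      have expand : atS n (k+1) =
          (es n k * es n (k+1) * er n k * (es n k * es n (k+1))⁻¹) *
          (es n k * es n (k+1) * es n k * (es n k * es n (k+1))⁻¹) *
          (es n k * es n (k+1) * er n k * (es n k * es n (k+1))⁻¹)⁻¹ *
          (es n k * es n (k+1) * es n k * (es n k * es n (k+1))⁻¹)⁻¹ := by
        rw [conjPi_s (n:=n) hk, conjPi_r (n:=n) hk]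
        rfl
      rw [h2, hmid, expand, hP]
      unfold atS
      group
    rw [← hstep]
    exact conjN hAmem ihk

end Diag


/-! ### top-index atoms -/

lemma offdiag_id {G : Type*} [Group G] (b c h : G) :
    ((b*c) * h * (b*c)⁻¹) * b * ((b*c) * h * (b*c)⁻¹)⁻¹ * b⁻¹
    = ((b*c) * (h * (b*c) * h⁻¹ * (b*c)⁻¹) * (b*c)⁻¹) *
      (b * (c * ((b*c) * h * (b*c)⁻¹) * c⁻¹ * ((b*c) * h * (b*c)⁻¹)⁻¹) * b⁻¹) := by
  group

section Top
variable (hm : 4 ≤ n - 1)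
include hm

/-- ⟨r_M⁻¹, s_M⟩ ∈ NN for the top index M = n-2. -/
lemma rtop_inv_diag :
    (er n (n-2))⁻¹ * es n (n-2) * er n (n-2) * (es n (n-2))⁻¹ ∈ NN n := by
  have hM : n-2 < n-1 := by omega
  have hE : n-4 < n-1 := by omega
  have ce1 : Commute (er n (n-4)) (es n (n-2)) := (cSR hM hE (by omega)).symm
  have ce2 : Commute (er n (n-4)) (er n (n-2)) := cRR hE hM (by left; omega)
  set y : GVB n := es n (n-2) * er n (n-2) * (es n (n-2))⁻¹ * (er n (n-2))⁻¹ with hy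
  have hc : Commute (er n (n-4)) y :=
    ((ce1.mul_right ce2).mul_right ce1.inv_right).mul_right ce2.inv_right
  have h1 : er n (n-4) * y * (er n (n-4))⁻¹ = y := conj_eq_of_commute hc
  have key : (er n (n-2))⁻¹ * es n (n-2) * er n (n-2) * (es n (n-2))⁻¹
      = ((er n (n-2))⁻¹ * er n (n-4)) * y * ((er n (n-2))⁻¹ * er n (n-4))⁻¹ := by
    have h2 : ((er n (n-2))⁻¹ * er n (n-4)) * y * ((er n (n-2))⁻¹ * er n (n-4))⁻¹
        = (er n (n-2))⁻¹ * (er n (n-4) * y * (er n (n-4))⁻¹) * er n (n-2) := by group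
    rw [h2, h1, hy]
    group
  rw [key]
  refine conjN ?_ ?_
  · refine zexpR_mem hm (mul_mem (inv_mem (er_mem_Br hM)) (er_mem_Br hE)) ?_
    rw [map_mul, map_inv, expR_er hM, expR_er hE]
    group
  · have : y = (atS n (n-2))⁻¹ := by rw [hy]; unfold atS; group
    rw [this]
    exact inv_mem (diag_mem hm _ hM)

/-- off-diagonal atom, ε = +1 : ⟨r_M, s_{M-1}⟩ ∈ NN. -/
lemma offdiag_pos :
    er n (n-2) * es n (n-3) * (er n (n-2))⁻¹ * (es n (n-3))⁻¹ ∈ NN n := by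
  have hM : n-2 < n-1 := by omega
  have hA : n-3 < n-1 := by omega
  have h' : (n-3)+1 < n-1 := by omega
  have e32 : n-3+1 = n-2 := by omega
  have hez0 := conjPi_r (n:=n) (k:=n-3) h'
  rw [e32] at hez0
  -- hez0 : (es (n-3) * es (n-2)) * er (n-3) * (es (n-3) * es (n-2))⁻¹ = er (n-2)
  have hid : er n (n-2) * es n (n-3) * (er n (n-2))⁻¹ * (es n (n-3))⁻¹
      = ((es n (n-3) * es n (n-2)) * (er n (n-3) * (er n (n-2))⁻¹) * (es n (n-3) * es n (n-2))⁻¹) *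
        (es n (n-3) * (es n (n-2) * er n (n-2) * (es n (n-2))⁻¹ * (er n (n-2))⁻¹) * (es n (n-3))⁻¹) := by
    rw [← hez0]
    group
  rw [hid]
  refine mul_mem ?_ ?_
  · -- part1 : conjugate of ρ̃ by P, dress with (es (n-5))^2
    have hf : n-5 < n-1 := by omega
    have cf1 : Commute (es n (n-5)) (er n (n-3)) := cSR hf hA (by left; omega)
    have cf2 : Commute (es n (n-5)) (er n (n-2)) := cSR hf hM (by left; omega)
    have hcρ : Commute ((es n (n-5))^(-2:ℤ)) (er n (n-3) * (er n (n-2))⁻¹) :=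
      (cf1.mul_right cf2.inv_right).zpow_left _
    have hpart : (es n (n-3) * es n (n-2)) * (er n (n-3) * (er n (n-2))⁻¹) * (es n (n-3) * es n (n-2))⁻¹
        = ((es n (n-3) * es n (n-2)) * (es n (n-5))^(-2:ℤ)) * (er n (n-3) * (er n (n-2))⁻¹) *
          ((es n (n-3) * es n (n-2)) * (es n (n-5))^(-2:ℤ))⁻¹ := by
      have := conj_eq_of_commute hcρ
      calc (es n (n-3) * es n (n-2)) * (er n (n-3) * (er n (n-2))⁻¹) * (es n (n-3) * es n (n-2))⁻¹
          = (es n (n-3) * es n (n-2)) *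
            ((es n (n-5))^(-2:ℤ) * (er n (n-3) * (er n (n-2))⁻¹) * ((es n (n-5))^(-2:ℤ))⁻¹) *
            (es n (n-3) * es n (n-2))⁻¹ := by rw [this]
        _ = _ := by group
    rw [hpart]
    refine conjN ?_ ?_
    · refine zexpS_mem hm
        (mul_mem (mul_mem (es_mem_Bs hA) (es_mem_Bs hM)) (zpow_mem (es_mem_Bs hf) _)) ?_
      rw [map_mul, map_mul, map_zpow, expS_es hA, expS_es hM, expS_es hf, ← ofAdd_zsmul,
        ← ofAdd_add, ← ofAdd_add]
      norm_num
    · refine zexpR_mem hm (mul_mem (er_mem_Br hA) (inv_mem (er_mem_Br hM))) ?_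
      rw [map_mul, map_inv, expR_er hA, expR_er hM]
      group
  · -- part2 : conjugate of (atS M)⁻¹ by es (n-3), dress with es (n-4)
    have hf : n-4 < n-1 := by omega
    have cf1 : Commute (es n (n-4)) (es n (n-2)) := cSS hf hM (by left; omega)
    have cf2 : Commute (es n (n-4)) (er n (n-2)) := cSR hf hM (by left; omega)
    have hcq : Commute ((es n (n-4))⁻¹)
        (es n (n-2) * er n (n-2) * (es n (n-2))⁻¹ * (er n (n-2))⁻¹) :=
      (((cf1.mul_right cf2).mul_right cf1.inv_right).mul_right cf2.inv_right).inv_left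
    have hpart : es n (n-3) * (es n (n-2) * er n (n-2) * (es n (n-2))⁻¹ * (er n (n-2))⁻¹) * (es n (n-3))⁻¹
        = (es n (n-3) * (es n (n-4))⁻¹) *
            (es n (n-2) * er n (n-2) * (es n (n-2))⁻¹ * (er n (n-2))⁻¹) *
          (es n (n-3) * (es n (n-4))⁻¹)⁻¹ := by
      have h9 := conj_eq_of_commute hcq
      rw [inv_inv] at h9
      calc es n (n-3) * (es n (n-2) * er n (n-2) * (es n (n-2))⁻¹ * (er n (n-2))⁻¹) * (es n (n-3))⁻¹
          = es n (n-3) *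
            ((es n (n-4))⁻¹ * (es n (n-2) * er n (n-2) * (es n (n-2))⁻¹ * (er n (n-2))⁻¹) * es n (n-4)) *
            (es n (n-3))⁻¹ := by rw [h9]
        _ = _ := by group
    rw [hpart]
    refine conjN ?_ ?_
    · refine zexpS_mem hm (mul_mem (es_mem_Bs hA) (inv_mem (es_mem_Bs hf))) ?_
      rw [map_mul, map_inv, expS_es hA, expS_es hf]
      group
    · have : es n (n-2) * er n (n-2) * (es n (n-2))⁻¹ * (er n (n-2))⁻¹ = (atS n (n-2))⁻¹ := by
        unfold atS; group
      rw [this]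
      exact inv_mem (diag_mem hm _ hM)

/-- off-diagonal atom, ε = -1 : ⟨r_M⁻¹, s_{M-1}⟩ ∈ NN. -/
lemma offdiag_neg :
    (er n (n-2))⁻¹ * es n (n-3) * er n (n-2) * (es n (n-3))⁻¹ ∈ NN n := by
  have hM : n-2 < n-1 := by omega
  have hA : n-3 < n-1 := by omega
  have h' : (n-3)+1 < n-1 := by omega
  have e32 : n-3+1 = n-2 := by omega
  have hez0 := conjPi_r (n:=n) (k:=n-3) h'
  rw [e32] at hez0
  have hid : (er n (n-2))⁻¹ * es n (n-3) * er n (n-2) * (es n (n-3))⁻¹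
      = ((es n (n-3) * es n (n-2)) * ((er n (n-3))⁻¹ * er n (n-2)) * (es n (n-3) * es n (n-2))⁻¹) *
        (es n (n-3) * (es n (n-2) * (er n (n-2))⁻¹ * (es n (n-2))⁻¹ * er n (n-2)) * (es n (n-3))⁻¹) := by
    rw [← hez0]
    group
  rw [hid]
  refine mul_mem ?_ ?_
  · have hf : n-5 < n-1 := by omega
    have cf1 : Commute (es n (n-5)) (er n (n-3)) := cSR hf hA (by left; omega)
    have cf2 : Commute (es n (n-5)) (er n (n-2)) := cSR hf hM (by left; omega)
    have hcρ : Commute ((es n (n-5))^(-2:ℤ)) ((er n (n-3))⁻¹ * er n (n-2)) :=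
      (cf1.inv_right.mul_right cf2).zpow_left _
    have hpart : (es n (n-3) * es n (n-2)) * ((er n (n-3))⁻¹ * er n (n-2)) * (es n (n-3) * es n (n-2))⁻¹
        = ((es n (n-3) * es n (n-2)) * (es n (n-5))^(-2:ℤ)) * ((er n (n-3))⁻¹ * er n (n-2)) *
          ((es n (n-3) * es n (n-2)) * (es n (n-5))^(-2:ℤ))⁻¹ := by
      have := conj_eq_of_commute hcρ
      calc (es n (n-3) * es n (n-2)) * ((er n (n-3))⁻¹ * er n (n-2)) * (es n (n-3) * es n (n-2))⁻¹
          = (es n (n-3) * es n (n-2)) *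
            ((es n (n-5))^(-2:ℤ) * ((er n (n-3))⁻¹ * er n (n-2)) * ((es n (n-5))^(-2:ℤ))⁻¹) *
            (es n (n-3) * es n (n-2))⁻¹ := by rw [this]
        _ = _ := by group
    rw [hpart]
    refine conjN ?_ ?_
    · refine zexpS_mem hm
        (mul_mem (mul_mem (es_mem_Bs hA) (es_mem_Bs hM)) (zpow_mem (es_mem_Bs hf) _)) ?_
      rw [map_mul, map_mul, map_zpow, expS_es hA, expS_es hM, expS_es hf, ← ofAdd_zsmul,
        ← ofAdd_add, ← ofAdd_add]
      norm_num
    · refine zexpR_mem hm (mul_mem (inv_mem (er_mem_Br hA)) (er_mem_Br hM)) ?_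
      rw [map_mul, map_inv, expR_er hA, expR_er hM]
      group
  · have hf : n-4 < n-1 := by omega
    have cf1 : Commute (es n (n-4)) (es n (n-2)) := cSS hf hM (by left; omega)
    have cf2 : Commute (es n (n-4)) (er n (n-2)) := cSR hf hM (by left; omega)
    have hcq : Commute ((es n (n-4))⁻¹)
        (es n (n-2) * (er n (n-2))⁻¹ * (es n (n-2))⁻¹ * er n (n-2)) :=
      (((cf1.mul_right cf2.inv_right).mul_right cf1.inv_right).mul_right cf2).inv_left
    have hpart : es n (n-3) * (es n (n-2) * (er n (n-2))⁻¹ * (es n (n-2))⁻¹ * er n (n-2)) * (es n (n-3))⁻¹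
        = (es n (n-3) * (es n (n-4))⁻¹) *
            (es n (n-2) * (er n (n-2))⁻¹ * (es n (n-2))⁻¹ * er n (n-2)) *
          (es n (n-3) * (es n (n-4))⁻¹)⁻¹ := by
      have h9 := conj_eq_of_commute hcq
      rw [inv_inv] at h9
      calc es n (n-3) * (es n (n-2) * (er n (n-2))⁻¹ * (es n (n-2))⁻¹ * er n (n-2)) * (es n (n-3))⁻¹
          = es n (n-3) *
            ((es n (n-4))⁻¹ * (es n (n-2) * (er n (n-2))⁻¹ * (es n (n-2))⁻¹ * er n (n-2)) * es n (n-4)) *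
            (es n (n-3))⁻¹ := by rw [h9]
        _ = _ := by group
    rw [hpart]
    refine conjN ?_ ?_
    · refine zexpS_mem hm (mul_mem (es_mem_Bs hA) (inv_mem (es_mem_Bs hf))) ?_
      rw [map_mul, map_inv, expS_es hA, expS_es hf]
      group
    · have : es n (n-2) * (er n (n-2))⁻¹ * (es n (n-2))⁻¹ * er n (n-2)
          = ((er n (n-2))⁻¹ * es n (n-2) * er n (n-2) * (es n (n-2))⁻¹)⁻¹ := by group
      rw [this]
      exact inv_mem (rtop_inv_diag hm)

end Top


lemma conj_mul_comm {G : Type*} [Group G] {g a b : G} (h : Commute g b) :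
    g * (a*b) * g⁻¹ = (g*a*g⁻¹) * b := by
  have h1 := conj_eq_of_commute h
  calc g*(a*b)*g⁻¹ = (g*a*g⁻¹)*(g*b*g⁻¹) := by group
    _ = (g*a*g⁻¹)*b := by rw [h1]

section Closure1
variable (hm : 4 ≤ n - 1)
include hm

lemma uR_mem_Br' {k : ℕ} (hk : k < n-1) : uR n k ∈ Br n :=
  mul_mem (er_mem_Br hk) (inv_mem (er_mem_Br (by omega)))

lemma uS_mem_Bs' {k : ℕ} (hk : k < n-1) : uS n k ∈ Bs n :=
  mul_mem (es_mem_Bs hk) (inv_mem (es_mem_Bs (by omega)))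

lemma expR_uR {k : ℕ} (hk : k < n-1) : expR n (uR n k) = 1 := by
  unfold uR
  rw [map_mul, map_inv, expR_er hk, expR_er (by omega : (0:ℕ) < n-1)]
  group

lemma expS_uS {k : ℕ} (hk : k < n-1) : expS n (uS n k) = 1 := by
  unfold uS
  rw [map_mul, map_inv, expS_es hk, expS_es (by omega : (0:ℕ) < n-1)]
  group

lemma conj_erM_Sset : ∀ x ∈ Sset n, er n (n-2) * x * (er n (n-2))⁻¹ ∈ NN n := by
  have hM : n-2 < n-1 := by omega
  have h0 : (0:ℕ) < n-1 := by omega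
  rintro x ((⟨k, hk0, rfl⟩ | ⟨k, hk0, rfl⟩) | rfl)
  · -- uS k
    have hk : k < n-1 := hk0
    have hc0 : Commute (er n (n-2)) ((es n 0)⁻¹) := ((cSR h0 hM (by omega)).symm).inv_right
    rcases Nat.lt_or_ge k (n-3) with hk4 | hk4
    · -- far: commute
      have hck : Commute (er n (n-2)) (es n k) := (cSR hk hM (by omega)).symm
      rw [show uS n k = es n k * (es n 0)⁻¹ from rfl,
        conj_eq_of_commute (hck.mul_right hc0)]
      exact uS_mem_NN hk
    · rcases Nat.lt_or_ge k (n-3) with hk3 | hk3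
      · omega
      · rcases Nat.lt_or_ge k (n-2) with hk2 | hk2
        · -- k = n-3 : off-diagonal atom
          have hknum : k = n-3 := by omega
          subst hknum
          rw [show uS n (n-3) = es n (n-3) * (es n 0)⁻¹ from rfl,
            conj_mul_comm hc0]
          have hsplit : er n (n-2) * es n (n-3) * (er n (n-2))⁻¹
              = (er n (n-2) * es n (n-3) * (er n (n-2))⁻¹ * (es n (n-3))⁻¹) * es n (n-3) := by
            group
          rw [hsplit]
          have : (er n (n-2) * es n (n-3) * (er n (n-2))⁻¹ * (es n (n-3))⁻¹) * es n (n-3) * (es n 0)⁻¹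
              = (er n (n-2) * es n (n-3) * (er n (n-2))⁻¹ * (es n (n-3))⁻¹) * uS n (n-3) := by
            unfold uS; group
          rw [this]
          exact mul_mem (offdiag_pos hm) (uS_mem_NN (by omega))
        · -- k = n-2 : diagonal atom
          have hknum : k = n-2 := by omega
          subst hknum
          rw [show uS n (n-2) = es n (n-2) * (es n 0)⁻¹ from rfl,
            conj_mul_comm hc0]
          have hsplit : er n (n-2) * es n (n-2) * (er n (n-2))⁻¹
              = atS n (n-2) * es n (n-2) := by
            unfold atS; group
          rw [hsplit]
          have : atS n (n-2) * es n (n-2) * (es n 0)⁻¹ = atS n (n-2) * uS n (n-2) := by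
            unfold uS; group
          rw [this]
          exact mul_mem (diag_mem hm _ hM) (uS_mem_NN hM)
  · -- uR k
    have hk : k < n-1 := hk0
    refine zexpR_mem hm ?_ ?_
    · exact mul_mem (mul_mem (er_mem_Br hM) (uR_mem_Br' hm hk)) (inv_mem (er_mem_Br hM))
    · rw [map_mul, map_mul, map_inv, expR_er hM, expR_uR hm hk]
      group
  · -- c0
    have ce1 : Commute (er n (n-2)) (es n 0) := (cSR h0 hM (by omega)).symm
    have ce2 : Commute (er n (n-2)) (er n 0) := cRR hM h0 (by omega)
    have hc : Commute (er n (n-2)) (c0 n) := by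
      unfold c0
      exact ((ce1.mul_right ce2).mul_right ce1.inv_right).mul_right ce2.inv_right
    rw [conj_eq_of_commute hc]
    exact c0_mem_NN

lemma conj_erM_inv_Sset : ∀ x ∈ Sset n, (er n (n-2))⁻¹ * x * er n (n-2) ∈ NN n := by
  have hM : n-2 < n-1 := by omega
  have h0 : (0:ℕ) < n-1 := by omega
  have base : ∀ x ∈ Sset n, (er n (n-2))⁻¹ * x * ((er n (n-2))⁻¹)⁻¹ ∈ NN n := by
    rintro x ((⟨k, hk0, rfl⟩ | ⟨k, hk0, rfl⟩) | rfl)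
    · have hk : k < n-1 := hk0
      have hc0 : Commute ((er n (n-2))⁻¹) ((es n 0)⁻¹) :=
        (((cSR h0 hM (by omega)).symm).inv_right).inv_left
      rcases Nat.lt_or_ge k (n-3) with hk4 | hk4
      · have hck : Commute ((er n (n-2))⁻¹) (es n k) := ((cSR hk hM (by omega)).symm).inv_left
        rw [show uS n k = es n k * (es n 0)⁻¹ from rfl,
          conj_eq_of_commute (hck.mul_right hc0)]
        exact uS_mem_NN hk
      · rcases Nat.lt_or_ge k (n-2) with hk2 | hk2
        · have hknum : k = n-3 := by omega
          subst hknum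
          rw [show uS n (n-3) = es n (n-3) * (es n 0)⁻¹ from rfl, conj_mul_comm hc0]
          have hsplit : (er n (n-2))⁻¹ * es n (n-3) * ((er n (n-2))⁻¹)⁻¹ * (es n 0)⁻¹
              = ((er n (n-2))⁻¹ * es n (n-3) * er n (n-2) * (es n (n-3))⁻¹) * uS n (n-3) := by
            unfold uS; group
          rw [hsplit]
          exact mul_mem (offdiag_neg hm) (uS_mem_NN (by omega))
        · have hknum : k = n-2 := by omega
          subst hknum
          rw [show uS n (n-2) = es n (n-2) * (es n 0)⁻¹ from rfl, conj_mul_comm hc0]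
          have hsplit : (er n (n-2))⁻¹ * es n (n-2) * ((er n (n-2))⁻¹)⁻¹ * (es n 0)⁻¹
              = ((er n (n-2))⁻¹ * es n (n-2) * er n (n-2) * (es n (n-2))⁻¹) * uS n (n-2) := by
            unfold uS; group
          rw [hsplit]
          exact mul_mem (rtop_inv_diag hm) (uS_mem_NN hM)
    · have hk : k < n-1 := hk0
      refine zexpR_mem hm ?_ ?_
      · exact mul_mem (mul_mem (inv_mem (er_mem_Br hM)) (uR_mem_Br' hm hk))
          (inv_mem (inv_mem (er_mem_Br hM)))
      · rw [map_mul, map_mul, map_inv, map_inv, map_inv, expR_er hM, expR_uR hm hk]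
        group
    · have ce1 : Commute ((er n (n-2))⁻¹) (es n 0) := ((cSR h0 hM (by omega)).symm).inv_left
      have ce2 : Commute ((er n (n-2))⁻¹) (er n 0) := (cRR hM h0 (by omega)).inv_left
      have hc : Commute ((er n (n-2))⁻¹) (c0 n) := by
        unfold c0
        exact ((ce1.mul_right ce2).mul_right ce1.inv_right).mul_right ce2.inv_right
      rw [conj_eq_of_commute hc]
      exact c0_mem_NN
  intro x hx
  have := base x hx
  rwa [inv_inv] at this

lemma conj_erM_NN {x : GVB n} (hx : x ∈ NN n) : er n (n-2) * x * (er n (n-2))⁻¹ ∈ NN n :=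
  conj_closure_mem _ _ _ (conj_erM_Sset hm) x hx

lemma conj_erM_inv_NN {x : GVB n} (hx : x ∈ NN n) : (er n (n-2))⁻¹ * x * er n (n-2) ∈ NN n := by
  have := conj_closure_mem ((er n (n-2))⁻¹) (Sset n) (NN n) ?_ x hx
  · simpa using this
  · intro y hy
    have := conj_erM_inv_Sset hm y hy
    simpa using this

lemma conj_erM_zpow_NN (p : ℤ) {x : GVB n} (hx : x ∈ NN n) :
    (er n (n-2))^p * x * (er n (n-2))^(-p) ∈ NN n := by
  induction p using Int.induction_on with
  | zero => simpa using hx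
  | succ q ih =>
      have h1 : (er n (n-2))^((q:ℤ)+1) * x * (er n (n-2))^(-((q:ℤ)+1))
          = er n (n-2) * ((er n (n-2))^(q:ℤ) * x * (er n (n-2))^(-(q:ℤ))) * (er n (n-2))⁻¹ := by
        group
      rw [h1]
      exact conj_erM_NN hm ih
  | pred q ih =>
      have h1 : (er n (n-2))^(-(q:ℤ)-1) * x * (er n (n-2))^(-(-(q:ℤ)-1))
          = (er n (n-2))⁻¹ * ((er n (n-2))^(-(q:ℤ)) * x * (er n (n-2))^(-(-(q:ℤ)))) * er n (n-2) := by
        group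
      rw [h1]
      exact conj_erM_inv_NN hm ih

end Closure1


/-! ### transport and the general mixed commutator lemma -/

lemma transport : ∀ k, k < n-1 →
    ∃ W, W ∈ Bs n ∧ W * es n 0 * W⁻¹ = es n k ∧ W * er n 0 * W⁻¹ = er n k := by
  intro k
  induction k with
  | zero =>
      intro _
      exact ⟨1, one_mem _, by group, by group⟩
  | succ k ih =>
      intro h
      obtain ⟨W, hW, hs, hr⟩ := ih (by omega)
      refine ⟨(es n k * es n (k+1)) * W,
        mul_mem (mul_mem (es_mem_Bs (by omega)) (es_mem_Bs h)) hW, ?_, ?_⟩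
      · have h1 : ((es n k * es n (k+1)) * W) * es n 0 * ((es n k * es n (k+1)) * W)⁻¹
            = (es n k * es n (k+1)) * (W * es n 0 * W⁻¹) * (es n k * es n (k+1))⁻¹ := by group
        rw [h1, hs]
        exact conjPi_s h
      · have h1 : ((es n k * es n (k+1)) * W) * er n 0 * ((es n k * es n (k+1)) * W)⁻¹
            = (es n k * es n (k+1)) * (W * er n 0 * W⁻¹) * (es n k * es n (k+1))⁻¹ := by group
        rw [h1, hr]
        exact conjPi_r h

section Mixed
variable (hm : 4 ≤ n - 1)
include hm

lemma conj_erM_by_Bs {v : GVB n} (hv : v ∈ Bs n) :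
    v * er n (n-2) * v⁻¹
      = (v * (es n 0)^(-(expS n v).toAdd)) * er n (n-2) *
        (v * (es n 0)^(-(expS n v).toAdd))⁻¹ := by
  have hM : n-2 < n-1 := by omega
  have h0 : (0:ℕ) < n-1 := by omega
  have hcom : Commute ((es n 0)^(-(expS n v).toAdd)) (er n (n-2)) :=
    (cSR h0 hM (by omega)).zpow_left _
  have h1 : (es n 0)^(-(expS n v).toAdd) * er n (n-2) * ((es n 0)^(-(expS n v).toAdd))⁻¹
      = er n (n-2) := conj_eq_of_commute hcom
  calc v * er n (n-2) * v⁻¹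
      = v * ((es n 0)^(-(expS n v).toAdd) * er n (n-2) *
          ((es n 0)^(-(expS n v).toAdd))⁻¹) * v⁻¹ := by rw [h1]
    _ = _ := by group

/-- main mixed-commutator lemma: [w, r_k] ∈ NN for any σ-word w. -/
lemma mixed_comm_mem {w : GVB n} (hw : w ∈ Bs n) {k : ℕ} (hk : k < n-1) :
    w * er n k * w⁻¹ * (er n k)⁻¹ ∈ NN n := by
  have hM : n-2 < n-1 := by omega
  obtain ⟨Wk, hWk, _, hrk⟩ := transport (n := n) k hk
  obtain ⟨WM, hWM, _, hrM⟩ := transport (n := n) (n-2) hM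
  set V : GVB n := Wk * WM⁻¹ with hVdef
  have hVmem : V ∈ Bs n := mul_mem hWk (inv_mem hWM)
  have hV : V * er n (n-2) * V⁻¹ = er n k := by
    rw [hVdef, ← hrM, ← hrk]
    group
  have hidA : w * er n k * w⁻¹ * (er n k)⁻¹
      = ((w*V) * er n (n-2) * (w*V)⁻¹) * (V * er n (n-2) * V⁻¹)⁻¹ := by
    rw [← hV]
    group
  set a : GVB n := (w*V) * (es n 0)^(-(expS n (w*V)).toAdd) with hadef
  set b : GVB n := V * (es n 0)^(-(expS n V).toAdd) with hbdef
  have ha : a ∈ NN n := Ns_le_NN (Bs_decomp hm (mul_mem hw hVmem))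
  have hb : b ∈ NN n := Ns_le_NN (Bs_decomp hm hVmem)
  have e1 : (w*V) * er n (n-2) * (w*V)⁻¹ = a * er n (n-2) * a⁻¹ :=
    conj_erM_by_Bs hm (mul_mem hw hVmem)
  have e2 : V * er n (n-2) * V⁻¹ = b * er n (n-2) * b⁻¹ :=
    conj_erM_by_Bs hm hVmem
  rw [hidA, e1, e2]
  have hfin : a * er n (n-2) * a⁻¹ * (b * er n (n-2) * b⁻¹)⁻¹
      = a * (er n (n-2) * (a⁻¹ * b) * (er n (n-2))⁻¹) * b⁻¹ := by group
  rw [hfin]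
  exact mul_mem (mul_mem ha (conj_erM_NN hm (mul_mem (inv_mem ha) hb))) (inv_mem hb)

/-! ### es0-closure of NN -/

lemma conj_es0_Sset : ∀ x ∈ Sset n, es n 0 * x * (es n 0)⁻¹ ∈ NN n := by
  have h0 : (0:ℕ) < n-1 := by omega
  rintro x ((⟨k, hk0, rfl⟩ | ⟨k, hk0, rfl⟩) | rfl)
  · exact Ns_le_NN (conj_es0_uS hm hk0)
  · have hk : k < n-1 := hk0
    have hid : es n 0 * uR n k * (es n 0)⁻¹
        = (es n 0 * er n k * (es n 0)⁻¹ * (er n k)⁻¹) * uR n k *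
          (es n 0 * er n 0 * (es n 0)⁻¹ * (er n 0)⁻¹)⁻¹ := by
      unfold uR
      group
    rw [hid]
    exact mul_mem (mul_mem (mixed_comm_mem hm (es_mem_Bs h0) hk) (uR_mem_NN hk))
      (inv_mem (mixed_comm_mem hm (es_mem_Bs h0) h0))
  · have hid : es n 0 * c0 n * (es n 0)⁻¹
        = ((es n 0 * es n 0) * er n 0 * (es n 0 * es n 0)⁻¹ * (er n 0)⁻¹) * (c0 n)⁻¹ := by
      unfold c0
      group
    rw [hid]
    exact mul_mem (mixed_comm_mem hm (mul_mem (es_mem_Bs h0) (es_mem_Bs h0)) h0)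
      (inv_mem c0_mem_NN)

lemma conj_es0_inv_Sset : ∀ x ∈ Sset n, (es n 0)⁻¹ * x * es n 0 ∈ NN n := by
  have h0 : (0:ℕ) < n-1 := by omega
  rintro x ((⟨k, hk0, rfl⟩ | ⟨k, hk0, rfl⟩) | rfl)
  · exact Ns_le_NN (conj_es0_inv_uS hm hk0)
  · have hk : k < n-1 := hk0
    have hid : (es n 0)⁻¹ * uR n k * es n 0
        = ((es n 0)⁻¹ * er n k * es n 0 * (er n k)⁻¹) * uR n k *
          ((es n 0)⁻¹ * er n 0 * es n 0 * (er n 0)⁻¹)⁻¹ := by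
      unfold uR
      group
    rw [hid]
    have hw : (es n 0)⁻¹ ∈ Bs n := inv_mem (es_mem_Bs h0)
    have m1 := mixed_comm_mem hm hw hk
    have m2 := mixed_comm_mem hm hw h0
    rw [inv_inv] at m1 m2
    exact mul_mem (mul_mem m1 (uR_mem_NN hk)) (inv_mem m2)
  · have hid : (es n 0)⁻¹ * c0 n * es n 0
        = ((es n 0)⁻¹ * er n 0 * es n 0 * (er n 0)⁻¹)⁻¹ := by
      unfold c0
      group
    rw [hid]
    have m2 := mixed_comm_mem hm (inv_mem (es_mem_Bs h0)) h0
    rw [inv_inv] at m2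
    exact inv_mem m2

lemma conj_es0_NN {x : GVB n} (hx : x ∈ NN n) : es n 0 * x * (es n 0)⁻¹ ∈ NN n :=
  conj_closure_mem _ _ _ (conj_es0_Sset hm) x hx

lemma conj_es0_inv_NN {x : GVB n} (hx : x ∈ NN n) : (es n 0)⁻¹ * x * es n 0 ∈ NN n := by
  have := conj_closure_mem ((es n 0)⁻¹) (Sset n) (NN n) ?_ x hx
  · simpa using this
  · intro y hy
    have := conj_es0_inv_Sset hm y hy
    simpa using this

lemma conj_es0_zpow_NN (p : ℤ) {x : GVB n} (hx : x ∈ NN n) :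
    (es n 0)^p * x * (es n 0)^(-p) ∈ NN n := by
  induction p using Int.induction_on with
  | zero => simpa using hx
  | succ q ih =>
      have h1 : (es n 0)^((q:ℤ)+1) * x * (es n 0)^(-((q:ℤ)+1))
          = es n 0 * ((es n 0)^(q:ℤ) * x * (es n 0)^(-(q:ℤ))) * (es n 0)⁻¹ := by
        group
      rw [h1]
      exact conj_es0_NN hm ih
  | pred q ih =>
      have h1 : (es n 0)^(-(q:ℤ)-1) * x * (es n 0)^(-(-(q:ℤ)-1))
          = (es n 0)⁻¹ * ((es n 0)^(-(q:ℤ)) * x * (es n 0)^(-(-(q:ℤ)))) * es n 0 := by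
        group
      rw [h1]
      exact conj_es0_inv_NN hm ih

end Mixed


/-! ### coset decomposition and the main theorem -/

section Final
variable (hm : 4 ≤ n - 1)
include hm

lemma NN_le_kerS : NN n ≤ (expS n).ker := by
  refine (Subgroup.closure_le _).mpr ?_
  rintro x ((⟨k, hk0, rfl⟩ | ⟨k, hk0, rfl⟩) | rfl)
  · exact MonoidHom.mem_ker.mpr (expS_uS hm hk0)
  · refine MonoidHom.mem_ker.mpr ?_
    have hk : k < n-1 := hk0
    unfold uR
    rw [map_mul, map_inv, expS_er hk, expS_er (by omega : (0:ℕ) < n-1)]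
    group
  · refine MonoidHom.mem_ker.mpr ?_
    unfold c0
    rw [map_mul, map_mul, map_mul, map_inv, map_inv,
      expS_es (by omega : (0:ℕ) < n-1), expS_er (by omega : (0:ℕ) < n-1)]
    group

lemma NN_le_kerR : NN n ≤ (expR n).ker := by
  refine (Subgroup.closure_le _).mpr ?_
  rintro x ((⟨k, hk0, rfl⟩ | ⟨k, hk0, rfl⟩) | rfl)
  · refine MonoidHom.mem_ker.mpr ?_
    have hk : k < n-1 := hk0
    unfold uS
    rw [map_mul, map_inv, expR_es hk, expR_es (by omega : (0:ℕ) < n-1)]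
    group
  · exact MonoidHom.mem_ker.mpr (expR_uR hm hk0)
  · refine MonoidHom.mem_ker.mpr ?_
    unfold c0
    rw [map_mul, map_mul, map_mul, map_inv, map_inv,
      expR_es (by omega : (0:ℕ) < n-1), expR_er (by omega : (0:ℕ) < n-1)]
    group

lemma decompD (g : GVB n) :
    ∃ x ∈ NN n, ∃ p q : ℤ, g = x * (es n 0)^p * (er n (n-2))^q := by
  have hM : n-2 < n-1 := by omega
  have h0 : (0:ℕ) < n-1 := by omega
  have hc : Commute (es n 0) (er n (n-2)) := cSR h0 hM (by omega)
  let D : Subgroup (GVB n) :=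
    { carrier := {g | ∃ x ∈ NN n, ∃ p q : ℤ, g = x * (es n 0)^p * (er n (n-2))^q},
      one_mem' := ⟨1, one_mem _, 0, 0, by simp⟩,
      mul_mem' := by
        rintro g₁ g₂ ⟨x, hx, p, q, rfl⟩ ⟨y, hy, p', q', rfl⟩
        refine ⟨x * ((es n 0)^p * ((er n (n-2))^q * y * (er n (n-2))^(-q)) * (es n 0)^(-p)),
          mul_mem hx (conj_es0_zpow_NN hm _ (conj_erM_zpow_NN hm _ hy)),
          p+p', q+q', ?_⟩
        have h2 : (er n (n-2))^q * (es n 0)^p' = (es n 0)^p' * (er n (n-2))^q :=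
          (hc.symm.zpow_zpow q p').eq
        have key : x * (es n 0)^p * (er n (n-2))^q * (y * (es n 0)^p' * (er n (n-2))^q')
            = (x * ((es n 0)^p * ((er n (n-2))^q * y * (er n (n-2))^(-q)) * (es n 0)^(-p))) *
              (es n 0)^p * ((er n (n-2))^q * (es n 0)^p') * (er n (n-2))^q' := by
          group
        rw [key, h2]
        group
      inv_mem' := by
        rintro g ⟨x, hx, p, q, rfl⟩
        refine ⟨(es n 0)^(-p) * ((er n (n-2))^(-q) * x⁻¹ * (er n (n-2))^(-(-q))) * (es n 0)^(-(-p)),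
          conj_es0_zpow_NN hm _ (conj_erM_zpow_NN hm _ (inv_mem hx)), -p, -q, ?_⟩
        have h2 : (es n 0)^(-p) * (er n (n-2))^(-q) = (er n (n-2))^(-q) * (es n 0)^(-p) :=
          (hc.zpow_zpow (-p) (-q)).eq
        have key : ((es n 0)^(-p) * ((er n (n-2))^(-q) * x⁻¹ * (er n (n-2))^(-(-q))) * (es n 0)^(-(-p))) *
              (es n 0)^(-p) * (er n (n-2))^(-q)
            = ((es n 0)^(-p) * (er n (n-2))^(-q)) * x⁻¹ := by
          group
        rw [key, h2]
        group }
  have hle : Subgroup.closure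
      (Set.range (PresentedGroup.of : Fin (n-1) ⊕ Fin (n-1) → GVB n)) ≤ D := by
    refine (Subgroup.closure_le _).mpr ?_
    rintro _ ⟨x, rfl⟩
    rcases x with i | i
    · refine ⟨uS n i.val, uS_mem_NN i.isLt, 1, 0, ?_⟩
      have h1 : uS n i.val * (es n 0)^(1:ℤ) * (er n (n-2))^(0:ℤ) = es n i.val := by
        unfold uS; group
      rw [h1, es_def i.isLt, Fin.eta]
      rfl
    · refine ⟨er n i.val * (er n (n-2))⁻¹, ?_, 0, 1, ?_⟩
      · refine zexpR_mem hm (mul_mem (er_mem_Br i.isLt) (inv_mem (er_mem_Br hM))) ?_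
        rw [map_mul, map_inv, expR_er i.isLt, expR_er hM]
        group
      · have h1 : er n i.val * (er n (n-2))⁻¹ * (es n 0)^(0:ℤ) * (er n (n-2))^(1:ℤ)
            = er n i.val := by group
        rw [h1, er_def i.isLt, Fin.eta]
        rfl
  have : g ∈ D := by
    have htop := PresentedGroup.closure_range_of (gvbRels n)
    rw [htop] at hle
    exact hle trivial
  exact this

lemma NN_eq_commutator : NN n = commutator (GVB n) := by
  apply le_antisymm
  · refine (Subgroup.closure_le _).mpr ?_
    rintro x ((⟨k, hk0, rfl⟩ | ⟨k, hk0, rfl⟩) | rfl)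
    · have hk : k < n-1 := hk0
      obtain ⟨W, hW, hs, hr⟩ := transport (n := n) k hk
      have h1 : uS n k = ⁅W, es n 0⁆ := by
        rw [commutatorElement_def]
        unfold uS
        rw [← hs]
      rw [h1, commutator_def]
      exact Subgroup.commutator_mem_commutator (Subgroup.mem_top _) (Subgroup.mem_top _)
    · have hk : k < n-1 := hk0
      obtain ⟨W, hW, hs, hr⟩ := transport (n := n) k hk
      have h1 : uR n k = ⁅W, er n 0⁆ := by
        rw [commutatorElement_def]
        unfold uR
        rw [← hr]
      rw [h1, commutator_def]
      exact Subgroup.commutator_mem_commutator (Subgroup.mem_top _) (Subgroup.mem_top _)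
    · have h1 : c0 n = ⁅es n 0, er n 0⁆ := by
        rw [commutatorElement_def]
        unfold c0
        group
      rw [h1, commutator_def]
      exact Subgroup.commutator_mem_commutator (Subgroup.mem_top _) (Subgroup.mem_top _)
  · intro g hg
    obtain ⟨x, hx, p, q, hgeq⟩ := decompD hm g
    have h0 : (0:ℕ) < n-1 := by omega
    have hM : n-2 < n-1 := by omega
    have e1 : expS n g = 1 := MonoidHom.mem_ker.mp
      (Abelianization.commutator_subset_ker (expS n) hg)
    have e2 : expR n g = 1 := MonoidHom.mem_ker.mp
      (Abelianization.commutator_subset_ker (expR n) hg)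
    have c1 : expS n g = Multiplicative.ofAdd p := by
      rw [hgeq, map_mul, map_mul, map_zpow, map_zpow,
        MonoidHom.mem_ker.mp (NN_le_kerS hm hx), expS_es h0, expS_er hM,
        ← ofAdd_zsmul]
      simp
    have c2 : expR n g = Multiplicative.ofAdd q := by
      rw [hgeq, map_mul, map_mul, map_zpow, map_zpow,
        MonoidHom.mem_ker.mp (NN_le_kerR hm hx), expR_es h0, expR_er hM,
        ← ofAdd_zsmul]
      simp
    have hp : p = 0 := by
      have := c1.symm.trans e1
      simpa using this
    have hq : q = 0 := by
      have := c2.symm.trans e2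
      simpa using this
    rw [hgeq, hp, hq]
    simpa using hx

end Final


theorem gvb_main (n : ℕ) (hn : 5 ≤ n) :
    ∃ S : Finset (GVB n), S.card ≤ 3 * n - 7 ∧
      Subgroup.closure (S : Set (GVB n)) = commutator (GVB n) := by
  classical
  have hm : 4 ≤ n - 1 := by omega
  have h0 : (0:ℕ) < n - 1 := by omega
  set i0 : Fin (n-1) := ⟨0, h0⟩ with hi0
  set f1 : Fin (n-1) → GVB n := fun i => σ n i * (σ n i0)⁻¹ with hf1
  set f2 : Fin (n-1) → GVB n := fun i => ρ n i * (ρ n i0)⁻¹ with hf2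
  have hσ0 : σ n i0 = es n 0 := (es_def h0).symm
  have hρ0 : ρ n i0 = er n 0 := (er_def h0).symm
  refine ⟨(Finset.univ.erase i0).image f1 ∪ (Finset.univ.erase i0).image f2 ∪ {c0 n}, ?_, ?_⟩
  · have hc1 : ((Finset.univ.erase i0).image f1).card ≤ n - 2 := by
      calc ((Finset.univ.erase i0).image f1).card ≤ (Finset.univ.erase i0).card :=
            Finset.card_image_le
        _ = n - 2 := by
            rw [Finset.card_erase_of_mem (Finset.mem_univ _), Finset.card_univ]
            simp only [Fintype.card_fin]
            omega
    have hc2 : ((Finset.univ.erase i0).image f2).card ≤ n - 2 := by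
      calc ((Finset.univ.erase i0).image f2).card ≤ (Finset.univ.erase i0).card :=
            Finset.card_image_le
        _ = n - 2 := by
            rw [Finset.card_erase_of_mem (Finset.mem_univ _), Finset.card_univ]
            simp only [Fintype.card_fin]
            omega
    calc ((Finset.univ.erase i0).image f1 ∪ (Finset.univ.erase i0).image f2 ∪ {c0 n}).card
        ≤ ((Finset.univ.erase i0).image f1 ∪ (Finset.univ.erase i0).image f2).card
          + ({c0 n} : Finset (GVB n)).card := Finset.card_union_le _ _
      _ ≤ ((Finset.univ.erase i0).image f1).card + ((Finset.univ.erase i0).image f2).card + 1 := by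
          have := Finset.card_union_le ((Finset.univ.erase i0).image f1)
            ((Finset.univ.erase i0).image f2)
          simp only [Finset.card_singleton]
          omega
      _ ≤ 3 * n - 7 := by omega
  · have hset : Subgroup.closure
        ((((Finset.univ.erase i0).image f1 ∪ (Finset.univ.erase i0).image f2 ∪ {c0 n}) :
          Finset (GVB n)) : Set (GVB n)) = NN n := by
      apply le_antisymm
      · refine (Subgroup.closure_le _).mpr ?_
        intro x hx
        simp only [Finset.coe_union, Set.mem_union, Finset.coe_image, Set.mem_image,
          Finset.mem_coe, Finset.coe_singleton, Set.mem_singleton_iff] at hx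
        rcases hx with (⟨i, _, rfl⟩ | ⟨i, _, rfl⟩) | rfl
        · have : f1 i = uS n i.val := by
            rw [hf1]
            simp only []
            rw [hσ0]
            unfold uS
            rw [es_def i.isLt, Fin.eta]
          rw [this]
          exact uS_mem_NN i.isLt
        · have : f2 i = uR n i.val := by
            rw [hf2]
            simp only []
            rw [hρ0]
            unfold uR
            rw [er_def i.isLt, Fin.eta]
          rw [this]
          exact uR_mem_NN i.isLt
        · exact c0_mem_NN
      · refine (Subgroup.closure_le _).mpr ?_
        rintro x ((⟨k, hk0, rfl⟩ | ⟨k, hk0, rfl⟩) | rfl)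
        · have hk : k < n - 1 := hk0
          rcases Nat.eq_zero_or_pos k with hk0' | hk0'
          · subst hk0'
            have : uS n 0 = 1 := by unfold uS; group
            rw [this]
            exact one_mem _
          · have hne : (⟨k, hk⟩ : Fin (n-1)) ≠ i0 := by
              rw [hi0]
              intro hcon
              have := congrArg Fin.val hcon
              simp at this
              omega
            have heq : uS n k = f1 ⟨k, hk⟩ := by
              rw [hf1]
              simp only []
              rw [hσ0]
              unfold uS
              rw [es_def hk]
            rw [heq]
            apply Subgroup.subset_closure
            simp only [Finset.coe_union, Set.mem_union, Finset.coe_image, Set.mem_image,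
              Finset.mem_coe]
            left; left
            exact ⟨⟨k, hk⟩, Finset.mem_erase.mpr ⟨hne, Finset.mem_univ _⟩, rfl⟩
        · have hk : k < n - 1 := hk0
          rcases Nat.eq_zero_or_pos k with hk0' | hk0'
          · subst hk0'
            have : uR n 0 = 1 := by unfold uR; group
            rw [this]
            exact one_mem _
          · have hne : (⟨k, hk⟩ : Fin (n-1)) ≠ i0 := by
              rw [hi0]
              intro hcon
              have := congrArg Fin.val hcon
              simp at this
              omega
            have heq : uR n k = f2 ⟨k, hk⟩ := by
              rw [hf2]
              simp only []
              rw [hρ0]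
              unfold uR
              rw [er_def hk]
            rw [heq]
            apply Subgroup.subset_closure
            simp only [Finset.coe_union, Set.mem_union, Finset.coe_image, Set.mem_image,
              Finset.mem_coe]
            left; right
            exact ⟨⟨k, hk⟩, Finset.mem_erase.mpr ⟨hne, Finset.mem_univ _⟩, rfl⟩
        · apply Subgroup.subset_closure
          simp
    rw [hset]
    exact NN_eq_commutator hm

end GVBAux

open GenVirtBraid in
/-- For every integer `n ≥ 5`, the commutator subgroup of `GVB_n` is generated by a set of
at most `3n - 7` elements. -/
theorem gvb_commutator_rank_le (n : ℕ) (hn : 5 ≤ n) :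
    ∃ S : Finset (GVB n), S.card ≤ 3 * n - 7 ∧
      Subgroup.closure (S : Set (GVB n)) = commutator (GVB n) :=
  GVBAux.gvb_main n hn
end

section
/- The commutator subgroup GVB_3' = [GVB_3, GVB_3] of the generalized virtual braid group GVB_3 is not finitely generated as a subgroup of GVB_3. -/
open scoped commutatorElement

section Lamplighter

open Finsupp SemidirectProduct

/-- The "lamps": finitely supported functions `ℤ → ZMod 2`, written multiplicatively. -/
abbrev Lamps : Type := Multiplicative (ℤ →₀ ZMod 2)

/-- Shift automorphism of the lamps. -/
noncomputable def shiftAut : MulAut Lamps :=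
  AddEquiv.toMultiplicative (Finsupp.domCongr (Equiv.addRight (1:ℤ)))

/-- The action of `ℤ` on the lamps by shifting. -/
noncomputable def lampPhi : Multiplicative ℤ →* MulAut Lamps := zpowersHom _ shiftAut

/-- The lamplighter group `ZMod 2 ≀ ℤ`. -/
abbrev LL : Type := Lamps ⋊[lampPhi] Multiplicative ℤ

noncomputable def lampA : LL := inl (Multiplicative.ofAdd (Finsupp.single (0:ℤ) (1:ZMod 2)))
noncomputable def lampT : LL := inr (Multiplicative.ofAdd (1:ℤ))

lemma shiftAut_single (k : ℤ) (v : ZMod 2) :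
    shiftAut (Multiplicative.ofAdd (Finsupp.single k v))
      = Multiplicative.ofAdd (Finsupp.single (k+1) v) := by
  show Multiplicative.ofAdd ((Finsupp.domCongr (Equiv.addRight (1:ℤ))) (Finsupp.single k v)) = _
  rw [Finsupp.domCongr_apply, Finsupp.equivMapDomain_single]
  rfl

lemma shiftAut_pow_single (m : ℕ) (k : ℤ) (v : ZMod 2) :
    (shiftAut ^ m) (Multiplicative.ofAdd (Finsupp.single k v))
      = Multiplicative.ofAdd (Finsupp.single (k+m) v) := by
  induction m generalizing k with
  | zero => simp
  | succ n ih =>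
      rw [pow_succ']
      show shiftAut ((shiftAut ^ n) _) = _
      rw [ih, shiftAut_single]
      push_cast
      ring_nf

lemma lamps_sq (n : Lamps) : n * n = 1 := by
  have : n.toAdd + n.toAdd = 0 := by
    ext a
    have : ∀ v : ZMod 2, v + v = 0 := by decide
    simp [this]
  calc n * n = Multiplicative.ofAdd (n.toAdd + n.toAdd) := rfl
  _ = 1 := by rw [this]; rfl

lemma lampA_sq : lampA * lampA = 1 := by
  rw [lampA, ← map_mul, lamps_sq, map_one]

lemma lampT_pow (m : ℕ) : lampT ^ m = inr (Multiplicative.ofAdd (m:ℤ)) := by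
  rw [lampT, ← map_pow]
  congr 1
  rw [← ofAdd_nsmul]
  congr 1
  simp

lemma commutator_lampT_lampA (m : ℕ) :
    ⁅lampT ^ m, lampA⁆
      = inl (Multiplicative.ofAdd
          (Finsupp.single (m:ℤ) (1:ZMod 2) - Finsupp.single 0 1)) := by
  rw [commutatorElement_def, lampT_pow, lampA, ← map_inv (inr : Multiplicative ℤ →* LL),
    ← SemidirectProduct.inl_aut, ← map_inv (inl : Lamps →* LL), ← map_mul]
  congr 1
  have h1 : lampPhi (Multiplicative.ofAdd (m:ℤ)) = shiftAut ^ m := by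
    rw [lampPhi, zpowersHom_apply]
    simp [zpow_natCast]
  rw [h1, shiftAut_pow_single, sub_eq_add_neg, ofAdd_add, ofAdd_neg]
  rw [zero_add]

end Lamplighter

section Main

open GenVirtBraid SemidirectProduct

/-- The map sending each `σ` to the lamp `lampA` and each `ρ` to the shift `lampT`. -/
noncomputable def Fgen : Fin (3-1) ⊕ Fin (3-1) → LL := Sum.elim (fun _ => lampA) (fun _ => lampT)

lemma Fgen_rels : ∀ r ∈ gvbRels 3, FreeGroup.lift Fgen r = 1 := by
  intro r hr
  rcases hr with ((((((hr | hr) | hr) | hr) | hr) | hr) | hr)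
  · obtain ⟨i, j, hij, rfl⟩ := hr
    have hi := i.is_lt; have hj := j.is_lt
    omega
  · obtain ⟨i, j, -, rfl⟩ := hr
    simp only [σw, ρw, map_mul, map_inv, FreeGroup.lift_apply_of, Fgen, Sum.elim_inl, Sum.elim_inr]
    group
  · obtain ⟨i, j, hij, rfl⟩ := hr
    have hi := i.is_lt; have hj := j.is_lt
    omega
  · obtain ⟨i, j, -, rfl⟩ := hr
    simp only [σw, ρw, map_mul, map_inv, FreeGroup.lift_apply_of, Fgen, Sum.elim_inl, Sum.elim_inr]
    group
  · obtain ⟨i, j, -, rfl⟩ := hr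
    simp only [σw, ρw, map_mul, map_inv, FreeGroup.lift_apply_of, Fgen, Sum.elim_inl, Sum.elim_inr]
    rw [mul_assoc lampT lampA lampA, lampA_sq]
    simp
  · obtain ⟨i, j, -, rfl⟩ := hr
    simp only [σw, ρw, map_mul, map_inv, FreeGroup.lift_apply_of, Fgen, Sum.elim_inl, Sum.elim_inr]
    rw [mul_assoc lampT lampA lampA, lampA_sq]
    simp
  · obtain ⟨i, j, hij, rfl⟩ := hr
    have hi := i.is_lt; have hj := j.is_lt
    omega

/-- The lamplighter representation of `GVB 3`. -/
noncomputable def fHom : GVB 3 →* LL := PresentedGroup.toGroup Fgen_rels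

end Main

open GenVirtBraid in
/-- The commutator subgroup of the generalized virtual braid group `GVB_3` is not
finitely generated. -/
theorem gvb3_commutator_not_fg : ¬ (commutator (GVB 3)).FG := by
  open SemidirectProduct in
  intro hFG
  set f := fHom with hf
  set K : Subgroup LL := ⁅f.range, f.range⁆ with hK
  -- the image of the commutator subgroup is `K`
  have hmap : (commutator (GVB 3)).map f = K := by
    rw [commutator_def, Subgroup.map_commutator, ← MonoidHom.range_eq_map]
  -- `K` is finitely generated
  have hKfg : K.FG := by
    rw [← hmap]
    obtain ⟨S, hS⟩ := hFG
    exact ⟨S.image f, by rw [Finset.coe_image, ← MonoidHom.map_closure, hS]⟩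
  -- every element of `K` lies in the base (lamps) part
  have hker : K ≤ (SemidirectProduct.rightHom (φ := lampPhi)).ker :=
    le_trans (Subgroup.commutator_mono le_top le_top)
      (Abelianization.commutator_subset_ker SemidirectProduct.rightHom)
  have hinl : ∀ x : LL, x ∈ K → x = inl x.left := by
    intro x hx
    have hx1 : x.right = 1 := hker hx
    conv_lhs => rw [← SemidirectProduct.inl_left_mul_inr_right x]
    rw [hx1, map_one, mul_one]
  -- `K` is commutative
  letI : CommGroup K :=
    { (inferInstance : Group K) with
      mul_comm := by
        rintro ⟨x, hx⟩ ⟨y, hy⟩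
        apply Subtype.ext
        show x * y = y * x
        rw [hinl x hx, hinl y hy, ← map_mul, ← map_mul, mul_comm] }
  haveI : Group.FG K := (Group.fg_iff_subgroup_fg K).mpr hKfg
  -- `K` is torsion (exponent 2)
  have htor : Monoid.IsTorsion K := by
    intro g
    refine isOfFinOrder_iff_pow_eq_one.mpr ⟨2, two_pos, ?_⟩
    apply Subtype.ext
    show (g : LL) ^ 2 = 1
    rw [pow_two, hinl g.1 g.2, ← map_mul, lamps_sq, map_one]
  haveI hfin : Finite K := CommGroup.finite_of_fg_torsion K htor
  -- but `K` is infinite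
  have hT : lampT ∈ f.range :=
    ⟨PresentedGroup.of (Sum.inr (0 : Fin (3-1))), PresentedGroup.toGroup.of _⟩
  have hA : lampA ∈ f.range :=
    ⟨PresentedGroup.of (Sum.inl (0 : Fin (3-1))), PresentedGroup.toGroup.of _⟩
  have hmem : ∀ m : ℕ, ⁅lampT ^ m, lampA⁆ ∈ K := fun m =>
    Subgroup.commutator_mem_commutator (pow_mem hT m) hA
  let g : ℕ → K := fun m => ⟨⁅lampT ^ (m+1), lampA⁆, hmem (m+1)⟩
  have hginj : Function.Injective g := by
    intro m1 m2 h
    have h' : ⁅lampT ^ (m1+1), lampA⁆ = ⁅lampT ^ (m2+1), lampA⁆ := congrArg Subtype.val h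
    rw [commutator_lampT_lampA, commutator_lampT_lampA] at h'
    have h2 := SemidirectProduct.inl_injective h'
    have h3 : (Finsupp.single ((m1+1:ℕ):ℤ) (1:ZMod 2) - Finsupp.single 0 1)
        = Finsupp.single ((m2+1:ℕ):ℤ) 1 - Finsupp.single 0 1 :=
      congrArg Multiplicative.toAdd h2
    have h4 : Finsupp.single ((m1+1:ℕ):ℤ) (1:ZMod 2) = Finsupp.single ((m2+1:ℕ):ℤ) 1 :=
      sub_left_injective h3
    have h5 : ((m1+1:ℕ):ℤ) = ((m2+1:ℕ):ℤ) :=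
      Finsupp.single_left_injective (by decide) h4
    omega
  haveI := Infinite.of_injective g hginj
  exact not_finite K
end

section
/- For every integer n ≥ 3, the commutator subgroup GVB_n' = [GVB_n, GVB_n] of the generalized virtual braid group GVB_n is a perfect group if and only if n ≥ 5; that is, [GVB_n', GVB_n'] = GVB_n' holds exactly when n ≥ 5. -/
namespace GVBAux

open Subgroup
open scoped commutatorElement

/-- Pure group-theoretic lemma: braid relation plus centrality of the commutator
forces the two elements to coincide. -/
lemma braid_eq {Q : Type*} [Group Q] {x y : Q} (hb : x * y * x = y * x * y)
    (h2 : y * ⁅x, y⁆ = ⁅x, y⁆ * y) : x = y := by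
  have e1 : x * y * x = ⁅x, y⁆ * y * (x * x) := by group
  have e2' : y * x * y = ⁅x, y⁆ * y * (y * x) := by rw [← h2]; group
  have e4 : ⁅x, y⁆ * y * (x * x) = ⁅x, y⁆ * y * (y * x) := by rw [← e1, hb, e2']
  have e5 : x * x = y * x := mul_left_cancel e4
  exact mul_right_cancel e5

lemma all_eq {Q : Type*} [Group Q] {m : ℕ} (hm : 4 ≤ m) (t : Fin m → Q)
    (habel : ∀ g ∈ commutator Q, ∀ h ∈ commutator Q, g * h = h * g)
    (hbraid : ∀ i j : Fin m, (j : ℕ) = (i : ℕ) + 1 → t i * t j * t i = t j * t i * t j)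
    (hfar : ∀ i j : Fin m, ((i : ℕ) + 1 < (j : ℕ) ∨ (j : ℕ) + 1 < (i : ℕ)) →
      t i * t j = t j * t i) :
    ∀ i j : Fin m, t i = t j := by
  have hm0 : 0 < m := by omega
  have hadj : ∀ i j : Fin m, (j : ℕ) = (i : ℕ) + 1 → t j * (t i)⁻¹ ∈ commutator Q := by
    intro i j h
    have key : t j * (t i)⁻¹ = ⁅t i * t j, t i⁆ := by
      have e : (t i * t j) * t i * (t i * t j)⁻¹ * (t i)⁻¹
          = (t i * t j * t i) * ((t j)⁻¹ * (t i)⁻¹ * (t i)⁻¹) := by group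
      rw [commutatorElement_def, e, hbraid i j h]; group
    rw [key, _root_.commutator_def]
    exact commutator_mem_commutator (mem_top _) (mem_top _)
  have hchain : ∀ i j : Fin m, t i * (t j)⁻¹ ∈ commutator Q := by
    have h0 : ∀ k : ℕ, ∀ hk : k < m, t ⟨k, hk⟩ * (t ⟨0, hm0⟩)⁻¹ ∈ commutator Q := by
      intro k
      induction k with
      | zero => intro hk; simpa using (commutator Q).one_mem
      | succ k ih =>
        intro hk
        have hk' : k < m := by omega
        have h1 := hadj ⟨k, hk'⟩ ⟨k + 1, hk⟩ rfl
        have e : t ⟨k+1, hk⟩ * (t ⟨0, hm0⟩)⁻¹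
            = (t ⟨k+1, hk⟩ * (t ⟨k, hk'⟩)⁻¹) * (t ⟨k, hk'⟩ * (t ⟨0, hm0⟩)⁻¹) := by group
        rw [e]; exact mul_mem h1 (ih hk')
    intro i j
    have hi := h0 i.val i.isLt
    have hj := h0 j.val j.isLt
    simp only [Fin.eta] at hi hj
    have e : t i * (t j)⁻¹ = (t i * (t ⟨0, hm0⟩)⁻¹) * (t j * (t ⟨0, hm0⟩)⁻¹)⁻¹ := by group
    rw [e]; exact mul_mem hi (inv_mem hj)
  have hconj : ∀ x ∈ commutator Q, ∀ i j : Fin m,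
      t i * x * (t i)⁻¹ = t j * x * (t j)⁻¹ := by
    intro x hx i j
    have hc : t i * (t j)⁻¹ ∈ commutator Q := hchain i j
    haveI : (commutator Q).Normal := inferInstance
    have hy : t j * x * (t j)⁻¹ ∈ commutator Q := by
      simpa [mul_assoc] using this.conj_mem x hx (t j)
    have hcy := habel _ hc _ hy
    calc t i * x * (t i)⁻¹
        = (t i * (t j)⁻¹) * (t j * x * (t j)⁻¹) * (t i * (t j)⁻¹)⁻¹ := by group
      _ = (t j * x * (t j)⁻¹) * (t i * (t j)⁻¹) * (t i * (t j)⁻¹)⁻¹ := by rw [hcy]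
      _ = t j * x * (t j)⁻¹ := by group
  have hadjeq : ∀ i j k : Fin m, (j : ℕ) = (i : ℕ) + 1 →
      ((i : ℕ) + 1 < (k : ℕ) ∨ (k : ℕ) + 1 < (i : ℕ)) →
      ((j : ℕ) + 1 < (k : ℕ) ∨ (k : ℕ) + 1 < (j : ℕ)) →
      t i = t j := by
    intro i j k hij hik hjk
    have hamem : ⁅t i, t j⁆ ∈ commutator Q := by
      rw [_root_.commutator_def]; exact commutator_mem_commutator (mem_top _) (mem_top _)
    have c1 : Commute (t k) (t i) := (Commute.symm (hfar i k hik))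
    have c2 : Commute (t k) (t j) := (Commute.symm (hfar j k hjk))
    have cka : Commute (t k) ⁅t i, t j⁆ := by
      rw [commutatorElement_def]
      exact ((c1.mul_right c2).mul_right c1.inv_right).mul_right c2.inv_right
    have haj : t j * ⁅t i, t j⁆ = ⁅t i, t j⁆ * t j := by
      have h := hconj ⁅t i, t j⁆ hamem j k
      have h2 : t k * ⁅t i, t j⁆ * (t k)⁻¹ = ⁅t i, t j⁆ := by
        rw [cka.eq]; group
      exact mul_inv_eq_iff_eq_mul.mp (h.trans h2)
    exact braid_eq (hbraid i j hij) haj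
  have hadj2 : ∀ i j : Fin m, (j : ℕ) = (i : ℕ) + 1 → t i = t j := by
    intro i j hij
    have hjm : (i : ℕ) + 1 < m := hij ▸ j.isLt
    by_cases h2 : 2 ≤ (i : ℕ)
    · refine hadjeq i j ⟨(i : ℕ) - 2, by omega⟩ hij (Or.inr ?_) (Or.inr ?_) <;>
        simp only [Fin.val_mk] <;> omega
    · by_cases h3 : (i : ℕ) + 4 ≤ m
      · refine hadjeq i j ⟨(i : ℕ) + 3, by omega⟩ hij (Or.inl ?_) (Or.inl ?_) <;>
          simp only [Fin.val_mk] <;> omega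
      · -- middle case: i = 1, m = 4
        have hi1 : (i : ℕ) = 1 := by omega
        have hm4 : m = 4 := by omega
        have h3m : 3 < m := by omega
        have h2m : 2 < m := by omega
        have e23 : t ⟨2, h2m⟩ = t ⟨3, h3m⟩ :=
          hadjeq ⟨2, h2m⟩ ⟨3, h3m⟩ ⟨0, hm0⟩ rfl (Or.inr (show 0 + 1 < 2 by omega))
            (Or.inr (show 0 + 1 < 3 by omega))
        have hj2 : j = ⟨2, h2m⟩ := Fin.ext (show (j : ℕ) = 2 by omega)
        have hc : Commute (t i) (t j) := by
          rw [hj2, e23]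
          exact hfar i ⟨3, h3m⟩ (Or.inl (show (i : ℕ) + 1 < 3 by omega))
        have ha1 : ⁅t i, t j⁆ = 1 := commutatorElement_eq_one_iff_commute.mpr hc
        exact braid_eq (hbraid i j hij) (by rw [ha1]; group)
  intro i j
  have h0 : ∀ k : ℕ, ∀ hk : k < m, t ⟨k, hk⟩ = t ⟨0, hm0⟩ := by
    intro k
    induction k with
    | zero => intro hk; rfl
    | succ k ih =>
      intro hk
      have hk' : k < m := by omega
      rw [← hadj2 ⟨k, hk'⟩ ⟨k + 1, hk⟩ rfl]
      exact ih hk'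
  have hi := h0 i.val i.isLt
  have hj := h0 j.val j.isLt
  simp only [Fin.eta] at hi hj
  rw [hi, hj]
open GenVirtBraid Subgroup

variable {n : ℕ}

lemma mk_rel_one {r : FreeGroup (Fin (n-1) ⊕ Fin (n-1))} (hr : r ∈ gvbRels n) :
    PresentedGroup.mk (gvbRels n) r = 1 :=
  (QuotientGroup.eq_one_iff r).mpr (Subgroup.subset_normalClosure hr)

lemma braid_σ (i j : Fin (n-1)) (h : (j : ℕ) = (i : ℕ) + 1) :
    σ n i * σ n j * σ n i = σ n j * σ n i * σ n j := by
  have hm : σw n i * σw n j * σw n i * (σw n j * σw n i * σw n j)⁻¹ ∈ gvbRels n :=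
    Or.inl (Or.inl (Or.inl (Or.inl (Or.inl (Or.inr ⟨i, j, h, rfl⟩)))))
  have h1 := mk_rel_one hm
  rw [map_mul, map_mul, map_inv, map_mul, map_mul] at h1
  exact mul_inv_eq_one.mp h1

lemma far_σ (i j : Fin (n-1)) (h : (i : ℕ) + 1 < (j : ℕ) ∨ (j : ℕ) + 1 < (i : ℕ)) :
    σ n i * σ n j = σ n j * σ n i := by
  have hm : σw n i * σw n j * (σw n i)⁻¹ * (σw n j)⁻¹ ∈ gvbRels n :=
    Or.inl (Or.inl (Or.inl (Or.inl (Or.inl (Or.inl ⟨i, j, h, rfl⟩)))))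
  have h1 := mk_rel_one hm
  rw [map_mul, map_mul, map_inv, map_inv] at h1
  exact commutatorElement_eq_one_iff_commute.mp
    (show ⁅PresentedGroup.mk (gvbRels n) (σw n i), PresentedGroup.mk (gvbRels n) (σw n j)⁆ = 1 by
      rw [commutatorElement_def]; exact h1)

lemma braid_ρ (i j : Fin (n-1)) (h : (j : ℕ) = (i : ℕ) + 1) :
    ρ n i * ρ n j * ρ n i = ρ n j * ρ n i * ρ n j := by
  have hm : ρw n i * ρw n j * ρw n i * (ρw n j * ρw n i * ρw n j)⁻¹ ∈ gvbRels n :=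
    Or.inl (Or.inl (Or.inl (Or.inr ⟨i, j, h, rfl⟩)))
  have h1 := mk_rel_one hm
  rw [map_mul, map_mul, map_inv, map_mul, map_mul] at h1
  exact mul_inv_eq_one.mp h1

lemma far_ρ (i j : Fin (n-1)) (h : (i : ℕ) + 1 < (j : ℕ) ∨ (j : ℕ) + 1 < (i : ℕ)) :
    ρ n i * ρ n j = ρ n j * ρ n i := by
  have hm : ρw n i * ρw n j * (ρw n i)⁻¹ * (ρw n j)⁻¹ ∈ gvbRels n :=
    Or.inl (Or.inl (Or.inl (Or.inl (Or.inr ⟨i, j, h, rfl⟩))))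
  have h1 := mk_rel_one hm
  rw [map_mul, map_mul, map_inv, map_inv] at h1
  exact commutatorElement_eq_one_iff_commute.mp
    (show ⁅PresentedGroup.mk (gvbRels n) (ρw n i), PresentedGroup.mk (gvbRels n) (ρw n j)⁆ = 1 by
      rw [commutatorElement_def]; exact h1)

lemma far_σρ (i j : Fin (n-1)) (h : (i : ℕ) + 1 < (j : ℕ) ∨ (j : ℕ) + 1 < (i : ℕ)) :
    σ n i * ρ n j = ρ n j * σ n i := by
  have hm : σw n i * ρw n j * (σw n i)⁻¹ * (ρw n j)⁻¹ ∈ gvbRels n :=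
    Or.inr ⟨i, j, h, rfl⟩
  have h1 := mk_rel_one hm
  rw [map_mul, map_mul, map_inv, map_inv] at h1
  exact commutatorElement_eq_one_iff_commute.mp
    (show ⁅PresentedGroup.mk (gvbRels n) (σw n i), PresentedGroup.mk (gvbRels n) (ρw n j)⁆ = 1 by
      rw [commutatorElement_def]; exact h1)

lemma perfect_of_five (n : ℕ) (hn : 5 ≤ n) :
    ⁅commutator (GVB n), commutator (GVB n)⁆ = commutator (GVB n) := by
  have hm : 4 ≤ n - 1 := by omega
  set N : Subgroup (GVB n) := ⁅commutator (GVB n), commutator (GVB n)⁆ with hN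
  refine le_antisymm (Subgroup.commutator_le_right _ _) ?_
  set π : GVB n →* (GVB n ⧸ N) := QuotientGroup.mk' N with hπ
  have hπs : Function.Surjective π := QuotientGroup.mk'_surjective N
  have hmapcomm : Subgroup.map π (commutator (GVB n)) = commutator (GVB n ⧸ N) := by
    have h := Subgroup.map_commutator (⊤ : Subgroup (GVB n)) ⊤ π
    rw [Subgroup.map_top_of_surjective _ hπs] at h
    exact h
  have habel : ∀ g ∈ commutator (GVB n ⧸ N), ∀ h ∈ commutator (GVB n ⧸ N),
      g * h = h * g := by
    intro g hg h hh
    rw [← hmapcomm] at hg hh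
    obtain ⟨g', hg', rfl⟩ := hg
    obtain ⟨h', hh', rfl⟩ := hh
    have h1 : ⁅π g', π h'⁆ = 1 := by
      rw [← map_commutatorElement]
      exact (QuotientGroup.eq_one_iff _).mpr (Subgroup.commutator_mem_commutator hg' hh')
    exact commutatorElement_eq_one_iff_commute.mp h1
  have hs := all_eq hm (fun i => π (σ n i)) habel
      (fun i j h => by simpa [map_mul] using congrArg π (braid_σ i j h))
      (fun i j h => by simpa [map_mul] using congrArg π (far_σ i j h))
  have hr := all_eq hm (fun i => π (ρ n i)) habel
      (fun i j h => by simpa [map_mul] using congrArg π (braid_ρ i j h))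
      (fun i j h => by simpa [map_mul] using congrArg π (far_ρ i j h))
  have hsr : ∀ i j : Fin (n-1), Commute (π (σ n i)) (π (ρ n j)) := by
    intro i j
    have h0 : (0 : ℕ) < n - 1 := by omega
    have h2 : (2 : ℕ) < n - 1 := by omega
    have e1 : π (σ n i) = π (σ n ⟨0, h0⟩) := hs i ⟨0, h0⟩
    have e2 : π (ρ n j) = π (ρ n ⟨2, h2⟩) := hr j ⟨2, h2⟩
    rw [e1, e2]
    have h3 := far_σρ (n := n) ⟨0, h0⟩ ⟨2, h2⟩ (Or.inl (show 0 + 1 < 2 by omega))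
    exact (by simpa [map_mul] using congrArg π h3 : π (σ n ⟨0, h0⟩) * π (ρ n ⟨2, h2⟩) = π (ρ n ⟨2, h2⟩) * π (σ n ⟨0, h0⟩))
  have base : ∀ p q : Fin (n-1) ⊕ Fin (n-1),
      Commute (π (PresentedGroup.of p)) (π (PresentedGroup.of q)) := by
    rintro (i | i) (j | j)
    · show Commute (π (σ n i)) (π (σ n j))
      have e : π (σ n i) = π (σ n j) := hs i j
      rw [e]
    · exact hsr i j
    · exact (hsr j i).symm
    · show Commute (π (ρ n i)) (π (ρ n j))
      have e : π (ρ n i) = π (ρ n j) := hr i j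
      rw [e]
  have single : ∀ p : Fin (n-1) ⊕ Fin (n-1), ∀ v : FreeGroup (Fin (n-1) ⊕ Fin (n-1)),
      Commute (π (PresentedGroup.mk (gvbRels n) (FreeGroup.of p)))
        (π (PresentedGroup.mk (gvbRels n) v)) := by
    intro p v
    refine FreeGroup.induction_on v ?_ ?_ ?_ ?_
    · simp only [map_one]; exact Commute.one_right _
    · intro q; exact base p q
    · intro q hq; simpa [map_inv] using hq.inv_right
    · intro v1 v2 h1 h2; simpa [map_mul] using h1.mul_right h2
  have main : ∀ w v : FreeGroup (Fin (n-1) ⊕ Fin (n-1)),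
      Commute (π (PresentedGroup.mk (gvbRels n) w)) (π (PresentedGroup.mk (gvbRels n) v)) := by
    intro w v
    refine FreeGroup.induction_on w ?_ ?_ ?_ ?_
    · simp only [map_one]; exact Commute.one_left _
    · intro p; exact single p v
    · intro p hp; simpa [map_inv] using (single p v).inv_left
    · intro w1 w2 h1 h2; simpa [map_mul] using h1.mul_left h2
  have hQ : ∀ a b : GVB n ⧸ N, a * b = b * a := by
    intro a b
    obtain ⟨x, rfl⟩ := hπs a
    obtain ⟨y, rfl⟩ := hπs b
    obtain ⟨w, rfl⟩ := PresentedGroup.mk_surjective (gvbRels n) x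
    obtain ⟨v, rfl⟩ := PresentedGroup.mk_surjective (gvbRels n) y
    exact main w v
  have hfin : (⁅(⊤ : Subgroup (GVB n)), ⊤⁆ : Subgroup (GVB n)) ≤ N := by
    refine Subgroup.commutator_le.mpr ?_
    intro g _ h _
    refine (QuotientGroup.eq_one_iff _).mp ?_
    show π ⁅g, h⁆ = 1
    rw [map_commutatorElement]
    exact commutatorElement_eq_one_iff_commute.mpr (hQ _ _)
  exact hfin

lemma not_perfect_small (n : ℕ) (h34 : n = 3 ∨ n = 4)
    (hP : ⁅commutator (GVB n), commutator (GVB n)⁆ = commutator (GVB n)) : False := by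
  classical
  have hrel : ∀ r ∈ gvbRels n, FreeGroup.lift
      (fun x : Fin (n-1) ⊕ Fin (n-1) =>
        if (x.elim Fin.val Fin.val) % 2 = 0 then Equiv.swap (0 : Fin 3) 1
        else Equiv.swap (1 : Fin 3) 2) r = 1 := by
    rcases h34 with rfl | rfl <;>
    · rintro r
        ((((((⟨i, j, hij, rfl⟩ | ⟨i, j, hij, rfl⟩) | ⟨i, j, hij, rfl⟩) | ⟨i, j, hij, rfl⟩) |
          ⟨i, j, hij, rfl⟩) | ⟨i, j, hij, rfl⟩) | ⟨i, j, hij, rfl⟩) <;>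
      simp only [σw, ρw, map_mul, map_inv, FreeGroup.lift_apply_of] <;>
      fin_cases i <;> fin_cases j <;>
      first
        | exact absurd hij (by decide)
        | decide
  set φ := PresentedGroup.toGroup hrel with hφ
  have h0lt : (0 : ℕ) < n - 1 := by rcases h34 with rfl | rfl <;> omega
  have h1lt : (1 : ℕ) < n - 1 := by rcases h34 with rfl | rfl <;> omega
  have hσ0 : φ (σ n ⟨0, h0lt⟩) = Equiv.swap (0 : Fin 3) 1 := by
    rw [hφ]
    show PresentedGroup.toGroup hrel (PresentedGroup.of _) = _
    rw [PresentedGroup.toGroup.of]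
    simp
  have hσ1 : φ (σ n ⟨1, h1lt⟩) = Equiv.swap (1 : Fin 3) 2 := by
    rw [hφ]
    show PresentedGroup.toGroup hrel (PresentedGroup.of _) = _
    rw [PresentedGroup.toGroup.of]
    simp
  have h1 : Subgroup.map φ (commutator (GVB n)) = ⁅φ.range, φ.range⁆ := by
    rw [_root_.commutator_def, Subgroup.map_commutator, ← MonoidHom.range_eq_map]
  have h2 : ⁅(⁅φ.range, φ.range⁆ : Subgroup (Equiv.Perm (Fin 3))), ⁅φ.range, φ.range⁆⁆
      = ⁅φ.range, φ.range⁆ := by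
    rw [← h1, ← Subgroup.map_commutator, hP]
  have hsign : ∀ x ∈ (⁅φ.range, φ.range⁆ : Subgroup (Equiv.Perm (Fin 3))),
      Equiv.Perm.sign x = 1 := by
    intro x hx
    have hle : (⁅φ.range, φ.range⁆ : Subgroup (Equiv.Perm (Fin 3)))
        ≤ MonoidHom.ker (Equiv.Perm.sign) := by
      refine Subgroup.commutator_le.mpr ?_
      intro g _ k _
      refine MonoidHom.mem_ker.mpr ?_
      rw [map_commutatorElement]
      exact commutatorElement_eq_one_iff_commute.mpr (mul_comm _ _)
    exact MonoidHom.mem_ker.mp (hle hx)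
  have hc3 : ∀ x y : Equiv.Perm (Fin 3),
      Equiv.Perm.sign x = 1 → Equiv.Perm.sign y = 1 → x * y = y * x := by decide
  have hbot : (⁅φ.range, φ.range⁆ : Subgroup (Equiv.Perm (Fin 3))) ≤ ⊥ := by
    rw [← h2]
    refine Subgroup.commutator_le.mpr ?_
    intro g hg k hk
    exact Subgroup.mem_bot.mpr
      (commutatorElement_eq_one_iff_commute.mpr (hc3 g k (hsign g hg) (hsign k hk)))
  have hmem : ⁅Equiv.swap (0 : Fin 3) 1, Equiv.swap (1 : Fin 3) 2⁆
      ∈ (⁅φ.range, φ.range⁆ : Subgroup (Equiv.Perm (Fin 3))) := by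
    rw [← hσ0, ← hσ1]
    exact Subgroup.commutator_mem_commutator (MonoidHom.mem_range.mpr ⟨_, rfl⟩)
      (MonoidHom.mem_range.mpr ⟨_, rfl⟩)
  have := Subgroup.mem_bot.mp (hbot hmem)
  exact absurd this (by decide)

end GVBAux

open GenVirtBraid in

/-- For every integer `n ≥ 3`, the commutator subgroup of `GVB_n` is perfect iff `n ≥ 5`. -/
theorem gvb_commutator_perfect_iff (n : ℕ) (hn : 3 ≤ n) :
    ⁅commutator (GVB n), commutator (GVB n)⁆ = commutator (GVB n) ↔ 5 ≤ n := by
  constructor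
  · intro hP
    by_contra hlt
    push_neg at hlt
    interval_cases n
    · exact (GVBAux.not_perfect_small 3 (Or.inl rfl) hP).elim
    · exact (GVBAux.not_perfect_small 4 (Or.inr rfl) hP).elim
  · intro h5
    exact GVBAux.perfect_of_five n h5
end

section
/- The commutator subgroups [UB_3, UB_3] and [UB_4, UB_4] of the universal braid groups UB_3 and UB_4 are not finitely generated (as subgroups of UB_3 and UB_4 respectively). -/
namespace UnivBraid

/-- The free-group generator word for `σ_{i+1}` (0-indexed `i`). -/
def σw (n : ℕ) (i : Fin (n-1)) : FreeGroup (Fin (n-1) ⊕ Fin (n-1)) := FreeGroup.of (Sum.inl i)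

/-- The free-group generator word for `ρ_{i+1}` (0-indexed `i`). -/
def ρw (n : ℕ) (i : Fin (n-1)) : FreeGroup (Fin (n-1) ⊕ Fin (n-1)) := FreeGroup.of (Sum.inr i)

/-- Defining relators of the universal braid group `UB_n`. -/
def ubRels (n : ℕ) : Set (FreeGroup (Fin (n-1) ⊕ Fin (n-1))) :=
  {r | ∃ i j : Fin (n-1), ((i:ℕ)+1 < (j:ℕ) ∨ (j:ℕ)+1 < (i:ℕ)) ∧
      r = σw n i * σw n j * (σw n i)⁻¹ * (σw n j)⁻¹} ∪
  {r | ∃ i j : Fin (n-1), (j:ℕ) = (i:ℕ)+1 ∧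
      r = σw n i * σw n j * σw n i * (σw n j * σw n i * σw n j)⁻¹} ∪
  {r | ∃ i j : Fin (n-1), ((i:ℕ)+1 < (j:ℕ) ∨ (j:ℕ)+1 < (i:ℕ)) ∧
      r = ρw n i * ρw n j * (ρw n i)⁻¹ * (ρw n j)⁻¹} ∪
  {r | ∃ i j : Fin (n-1), ((i:ℕ)+1 < (j:ℕ) ∨ (j:ℕ)+1 < (i:ℕ)) ∧
      r = σw n i * ρw n j * (σw n i)⁻¹ * (ρw n j)⁻¹}

/-- Bardakov's universal braid group `UB_n`. -/
abbrev UB (n : ℕ) := PresentedGroup (ubRels n)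

end UnivBraid

namespace UBProofAux

open UnivBraid
open Finsupp SemidirectProduct Multiplicative
open scoped commutatorElement

noncomputable abbrev A : Type := ℤ →₀ ZMod 2
noncomputable def shiftA : A ≃+ A := Finsupp.domCongr (Equiv.addRight (1:ℤ))
noncomputable def mshift : MulAut (Multiplicative A) := AddEquiv.toMultiplicative shiftA
noncomputable def φφ : Multiplicative ℤ →* MulAut (Multiplicative A) := zpowersHom _ mshift
noncomputable abbrev L : Type := Multiplicative A ⋊[φφ] Multiplicative ℤ
noncomputable def lamp : L := inl (ofAdd (Finsupp.single 0 1))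
noncomputable def sh : L := inr (ofAdd 1)

lemma mshift_apply (x : A) : mshift (ofAdd x) = ofAdd (shiftA x) := rfl
lemma mshift_inv_apply (x : A) : mshift⁻¹ (ofAdd x) = ofAdd (shiftA.symm x) := rfl

lemma shiftA_single (a : ℤ) (b : ZMod 2) : shiftA (Finsupp.single a b) = Finsupp.single (a+1) b := by
  rw [shiftA, Finsupp.domCongr_apply, Finsupp.equivMapDomain_single]
  rfl

lemma shiftA_symm_single (a : ℤ) (b : ZMod 2) : shiftA.symm (Finsupp.single a b) = Finsupp.single (a-1) b := by
  apply shiftA.injective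
  rw [AddEquiv.apply_symm_apply, shiftA_single, sub_add_cancel]

lemma mshift_zpow (z : ℤ) (a : ℤ) (b : ZMod 2) :
    (mshift ^ z) (ofAdd (Finsupp.single a b)) = ofAdd (Finsupp.single (a+z) b) := by
  induction z using Int.induction_on generalizing a with
  | zero => simp
  | succ n ih =>
      have h : mshift ^ ((n:ℤ)+1) = mshift ^ (n:ℤ) * mshift := by rw [zpow_add_one]
      rw [h, MulAut.mul_apply, mshift_apply, shiftA_single, ih]
      ring_nf
  | pred n ih =>
      have h : mshift ^ (-(n:ℤ)-1) = mshift ^ (-(n:ℤ)) * mshift⁻¹ := by rw [zpow_sub_one]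
      rw [h, MulAut.mul_apply, mshift_inv_apply, shiftA_symm_single, ih]
      ring_nf

lemma phi_apply (z : ℤ) (a : ℤ) (b : ZMod 2) :
    φφ (ofAdd z) (ofAdd (Finsupp.single a b)) = ofAdd (Finsupp.single (a+z) b) := by
  rw [φφ, zpowersHom_apply, toAdd_ofAdd, mshift_zpow]

lemma commutator_inl_inr (n : Multiplicative A) (g : Multiplicative ℤ) :
    ⁅(inl n : L), (inr g : L)⁆ = inl (n * φφ g n⁻¹) := by
  rw [commutatorElement_def, map_mul, inl_aut, map_inv, map_inv]
  group

noncomputable def cc (k : ℕ) : L := ⁅lamp, sh ^ ((k:ℤ)+1)⁆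

lemma sh_zpow (z : ℤ) : sh ^ z = inr (ofAdd z) := by
  rw [sh, ← map_zpow]
  congr 1
  rw [← ofAdd_zsmul]
  simp

lemma cc_eq (k : ℕ) : cc k = inl (ofAdd (Finsupp.single 0 1 + Finsupp.single ((k:ℤ)+1) (-1))) := by
  rw [cc, sh_zpow, lamp, commutator_inl_inr]
  rw [← ofAdd_neg, ← Finsupp.single_neg, phi_apply, ← ofAdd_add]
  norm_num

lemma cc_injective : Function.Injective cc := by
  intro k j h
  by_contra hkj
  rw [cc_eq, cc_eq] at h
  have h2 : (Finsupp.single (0:ℤ) (1:ZMod 2) + Finsupp.single ((k:ℤ)+1) (-1))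
      = Finsupp.single 0 1 + Finsupp.single ((j:ℤ)+1) (-1) :=
    ofAdd.injective (inl_injective h)
  have h3 := Finsupp.ext_iff.1 h2 ((k:ℤ)+1)
  have hk0 : ((k:ℤ)+1) ≠ 0 := by omega
  have hkj' : ((j:ℤ)+1) ≠ ((k:ℤ)+1) := by omega
  simp [Finsupp.single_apply, hkj', (show ¬((0:ℤ)=(k:ℤ)+1) by omega)] at h3

open Subgroup in
lemma gen_top : Subgroup.closure ({lamp, sh} : Set L) = ⊤ := by
  rw [eq_top_iff]
  intro x _
  have hsh : ∀ z : ℤ, (inr (ofAdd z) : L) ∈ Subgroup.closure ({lamp, sh} : Set L) := by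
    intro z
    rw [← sh_zpow]
    exact zpow_mem (subset_closure (by simp)) z
  have hlamp : ∀ f : A, (inl (ofAdd f) : L) ∈ Subgroup.closure ({lamp, sh} : Set L) := by
    intro f
    induction f using Finsupp.induction with
    | zero => simpa using one_mem _
    | single_add a b g _ _ ih =>
        rw [ofAdd_add, map_mul]
        refine mul_mem ?_ ih
        have hb' : ∀ c : ZMod 2, c = 0 ∨ c = 1 := by decide
        rcases hb' b with hb | hb
        · simp [hb]
        · subst hb
          have key : (inl (ofAdd (Finsupp.single a 1)) : L)
              = inr (ofAdd a) * lamp * (inr (ofAdd a))⁻¹ := by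
            rw [lamp, ← map_inv, ← inl_aut, phi_apply, zero_add]
          rw [key]
          exact mul_mem (mul_mem (hsh a) (subset_closure (by simp))) (inv_mem (hsh a))
  have hx : x = inl x.left * inr x.right := by
    exact (SemidirectProduct.inl_left_mul_inr_right x).symm
  rw [hx]
  exact mul_mem (hlamp (Multiplicative.toAdd x.left)) (hsh (Multiplicative.toAdd x.right))

lemma commutator_L_infinite : (commutator L : Set L).Infinite :=
  Set.infinite_of_injective_forall_mem cc_injective (fun _ =>
    Subgroup.commutator_mem_commutator (Subgroup.mem_top _) (Subgroup.mem_top _))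

lemma closure_finite_in_multA {T : Set (Multiplicative A)} (hT : T.Finite) :
    ((Subgroup.closure T : Subgroup (Multiplicative A)) : Set (Multiplicative A)).Finite := by
  set T' : Set A := Multiplicative.toAdd '' T with hT'def
  have hT' : T'.Finite := hT.image _
  have hspan : ((Submodule.span (ZMod 2) T' : Submodule (ZMod 2) A) : Set A).Finite := by
    haveI : Module.Finite (ZMod 2) (Submodule.span (ZMod 2) T') :=
      Module.Finite.iff_fg.mpr (Submodule.fg_span hT')
    haveI : Finite (Submodule.span (ZMod 2) T') := Module.finite_of_finite (ZMod 2)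
    exact ((Submodule.span (ZMod 2) T' : Submodule (ZMod 2) A) : Set A).toFinite
  have hC : ((AddSubgroup.closure T' : AddSubgroup A) : Set A).Finite := by
    refine hspan.subset ?_
    exact AddSubgroup.closure_le ((Submodule.span (ZMod 2) T').toAddSubgroup) |>.mpr
      Submodule.subset_span
  have hle : Subgroup.closure T ≤ AddSubgroup.toSubgroup (AddSubgroup.closure T') := by
    rw [Subgroup.closure_le]
    intro t ht
    show Multiplicative.toAdd t ∈ AddSubgroup.closure T'
    exact AddSubgroup.subset_closure (Set.mem_image_of_mem _ ht)
  have hfin2 : ((AddSubgroup.toSubgroup (AddSubgroup.closure T') :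
      Subgroup (Multiplicative A)) : Set (Multiplicative A)).Finite := by
    have : ((AddSubgroup.toSubgroup (AddSubgroup.closure T') :
        Subgroup (Multiplicative A)) : Set (Multiplicative A))
        = Multiplicative.toAdd ⁻¹' (AddSubgroup.closure T' : Set A) := rfl
    rw [this]
    exact hC.preimage (Multiplicative.toAdd.injective.injOn)
  exact hfin2.subset hle

lemma commutator_L_not_fg : ¬ (commutator L).FG := by
  intro hfg
  rcases (Subgroup.fg_iff _).mp hfg with ⟨S, hScl, hSfin⟩
  have hSsub : S ⊆ Set.range (inl : Multiplicative A →* L) := by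
    intro s hs
    have hmem : s ∈ commutator L := hScl ▸ Subgroup.subset_closure hs
    have h1 : s ∈ (rightHom : L →* Multiplicative ℤ).ker :=
      Abelianization.commutator_subset_ker _ hmem
    have h2 : s ∈ (inl : Multiplicative A →* L).range := by
      rw [range_inl_eq_ker_rightHom]; exact h1
    exact h2
  set T : Set (Multiplicative A) := (inl : Multiplicative A →* L) ⁻¹' S with hTdef
  have hTfin : T.Finite := hSfin.preimage (inl_injective.injOn)
  have hST : (inl : Multiplicative A →* L) '' T = S := by
    apply Set.Subset.antisymm
    · exact Set.image_preimage_subset _ _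
    · intro s hs
      rcases hSsub hs with ⟨n, rfl⟩
      exact Set.mem_image_of_mem _ hs
  have hmap : commutator L = Subgroup.map inl (Subgroup.closure T) := by
    rw [MonoidHom.map_closure, hST, hScl]
  have hfin : (commutator L : Set L).Finite := by
    rw [hmap, Subgroup.coe_map]
    exact (closure_finite_in_multA hTfin).image _
  exact commutator_L_infinite hfin


open UnivBraid

noncomputable def fgen (n : ℕ) : (Fin (n-1) ⊕ Fin (n-1)) → L :=
  Sum.elim (fun _ => 1) (fun i => if (i:ℕ) = 0 then lamp else if (i:ℕ) = 1 then sh else 1)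

lemma hrels (n : ℕ) (hn : n = 3 ∨ n = 4) :
    ∀ r ∈ ubRels n, FreeGroup.lift (fgen n) r = 1 := by
  intro r hr
  rcases hr with ((⟨i, j, hij, rfl⟩ | ⟨i, j, hij, rfl⟩) | ⟨i, j, hij, rfl⟩) | ⟨i, j, hij, rfl⟩
  · simp [σw, fgen]
  · simp [σw, fgen]
  · have hi := i.isLt
    have hj := j.isLt
    have h2 : (i:ℕ) = 0 ∧ (j:ℕ) = 2 ∨ (i:ℕ) = 2 ∧ (j:ℕ) = 0 := by
      rcases hn with rfl | rfl <;> omega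
    rcases h2 with ⟨hi2, hj2⟩ | ⟨hi2, hj2⟩ <;>
      simp [ρw, fgen, hi2, hj2]
  · simp [σw, ρw, fgen]

noncomputable def gsurj (n : ℕ) (hn : n = 3 ∨ n = 4) : UB n →* L :=
  PresentedGroup.toGroup (hrels n hn)

lemma gsurj_surjective (n : ℕ) (hn : n = 3 ∨ n = 4) : Function.Surjective (gsurj n hn) := by
  rw [← MonoidHom.range_eq_top]
  rw [eq_top_iff, ← gen_top, Subgroup.closure_le]
  have h2 : (2:ℕ) ≤ n - 1 := by rcases hn with rfl | rfl <;> norm_num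
  rintro x (rfl | rfl)
  · refine ⟨PresentedGroup.of (Sum.inr ⟨0, by omega⟩), ?_⟩
    rw [gsurj, PresentedGroup.toGroup.of]
    simp [fgen]
  · refine ⟨PresentedGroup.of (Sum.inr ⟨1, by omega⟩), ?_⟩
    rw [gsurj, PresentedGroup.toGroup.of]
    simp [fgen]

lemma fg_push {G H : Type*} [Group G] [Group H] (f : G →* H) (hf : Function.Surjective f)
    (h : (commutator G).FG) : (commutator H).FG := by
  rcases (Subgroup.fg_iff _).mp h with ⟨S, hScl, hSfin⟩
  refine (Subgroup.fg_iff _).mpr ⟨f '' S, ?_, hSfin.image f⟩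
  rw [← MonoidHom.map_closure, hScl, commutator_def, commutator_def,
    Subgroup.map_commutator, Subgroup.map_top_of_surjective f hf]

theorem ub3_ub4_commutator_not_fg_aux :
    ¬ (commutator (UB 3)).FG ∧ ¬ (commutator (UB 4)).FG := by
  constructor
  · intro hfg
    exact commutator_L_not_fg (fg_push _ (gsurj_surjective 3 (Or.inl rfl)) hfg)
  · intro hfg
    exact commutator_L_not_fg (fg_push _ (gsurj_surjective 4 (Or.inr rfl)) hfg)

end UBProofAux

open UnivBraid in
/-- The commutator subgroups of the universal braid groups `UB_3` and `UB_4` are not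
finitely generated. -/
theorem ub3_ub4_commutator_not_fg :
    ¬ (commutator (UB 3)).FG ∧ ¬ (commutator (UB 4)).FG :=
  UBProofAux.ub3_ub4_commutator_not_fg_aux
end

section
/- For every integer n ≥ 3, the commutator subgroup SG_n' = [SG_n, SG_n] of the singular braid group SG_n equals the subgroup of SG_n generated by the set of all elements α_{m,k,i} = σ_1^m ρ_1^k σ_i ρ_1^{−k} σ_1^{−1} σ_1^{−m} and β_{m,k,i} = σ_1^m ρ_1^k ρ_i ρ_1^{−k} ρ_1^{−1} σ_1^{−m}, where m, k range over all integers and i ranges over 1, …, n−1. -/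
namespace SingBraid

/-- The free-group generator word for `σ_{i+1}` (0-indexed `i`). -/
def σw (n : ℕ) (i : Fin (n-1)) : FreeGroup (Fin (n-1) ⊕ Fin (n-1)) := FreeGroup.of (Sum.inl i)

/-- The free-group generator word for `ρ_{i+1}` (0-indexed `i`). -/
def ρw (n : ℕ) (i : Fin (n-1)) : FreeGroup (Fin (n-1) ⊕ Fin (n-1)) := FreeGroup.of (Sum.inr i)

/-- Defining relators of the singular braid group `SG_n`. -/
def sgRels (n : ℕ) : Set (FreeGroup (Fin (n-1) ⊕ Fin (n-1))) :=
  {r | ∃ i j : Fin (n-1), ((i:ℕ)+1 < (j:ℕ) ∨ (j:ℕ)+1 < (i:ℕ)) ∧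
      r = σw n i * σw n j * (σw n i)⁻¹ * (σw n j)⁻¹} ∪
  {r | ∃ i j : Fin (n-1), (j:ℕ) = (i:ℕ)+1 ∧
      r = σw n i * σw n j * σw n i * (σw n j * σw n i * σw n j)⁻¹} ∪
  {r | ∃ i j : Fin (n-1), ((i:ℕ)+1 < (j:ℕ) ∨ (j:ℕ)+1 < (i:ℕ)) ∧
      r = ρw n i * ρw n j * (ρw n i)⁻¹ * (ρw n j)⁻¹} ∪
  {r | ∃ i j : Fin (n-1), (j:ℕ) = (i:ℕ)+1 ∧
      r = ρw n i * σw n j * σw n i * (σw n j * σw n i * ρw n j)⁻¹} ∪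
  {r | ∃ i j : Fin (n-1), (j:ℕ) = (i:ℕ)+1 ∧
      r = ρw n j * σw n i * σw n j * (σw n i * σw n j * ρw n i)⁻¹} ∪
  {r | ∃ i j : Fin (n-1), (i = j ∨ (i:ℕ)+1 < (j:ℕ) ∨ (j:ℕ)+1 < (i:ℕ)) ∧
      r = σw n i * ρw n j * (σw n i)⁻¹ * (ρw n j)⁻¹}

/-- The singular braid group `SG_n`, given by the Baez–Birman presentation. -/
abbrev SG (n : ℕ) := PresentedGroup (sgRels n)

/-- The generator `σ_{i+1}` of `SG_n` (0-indexed `i`). -/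
def σ (n : ℕ) (i : Fin (n-1)) : SG n := PresentedGroup.of (Sum.inl i)

/-- The generator `ρ_{i+1}` of `SG_n` (0-indexed `i`). -/
def ρ (n : ℕ) (i : Fin (n-1)) : SG n := PresentedGroup.of (Sum.inr i)

end SingBraid

namespace SingBraid

/-- The element `α_{m,k,i} = σ₁^m ρ₁^k σ_i ρ₁^{-k} σ₁^{-1} σ₁^{-m}` of `SG_n`. -/
def alphaElt (n : ℕ) (h : 0 < n - 1) (m k : ℤ) (i : Fin (n-1)) : SG n :=
  σ n ⟨0, h⟩ ^ m * ρ n ⟨0, h⟩ ^ k * σ n i * ρ n ⟨0, h⟩ ^ (-k) *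
    (σ n ⟨0, h⟩)⁻¹ * σ n ⟨0, h⟩ ^ (-m)

/-- The element `β_{m,k,i} = σ₁^m ρ₁^k ρ_i ρ₁^{-k} ρ₁^{-1} σ₁^{-m}` of `SG_n`. -/
def betaElt (n : ℕ) (h : 0 < n - 1) (m k : ℤ) (i : Fin (n-1)) : SG n :=
  σ n ⟨0, h⟩ ^ m * ρ n ⟨0, h⟩ ^ k * ρ n i * ρ n ⟨0, h⟩ ^ (-k) *
    (ρ n ⟨0, h⟩)⁻¹ * σ n ⟨0, h⟩ ^ (-m)

end SingBraid

namespace SingBraid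
variable {n : ℕ}

lemma mk_rel_one {r : FreeGroup (Fin (n-1) ⊕ Fin (n-1))} (hr : r ∈ sgRels n) :
    PresentedGroup.mk (sgRels n) r = 1 :=
  (QuotientGroup.eq_one_iff r).mpr (Subgroup.subset_normalClosure hr)

lemma mk_σw (i : Fin (n-1)) : PresentedGroup.mk (sgRels n) (σw n i) = σ n i := rfl
lemma mk_ρw (i : Fin (n-1)) : PresentedGroup.mk (sgRels n) (ρw n i) = ρ n i := rfl

lemma sigma_rho_comm (i : Fin (n-1)) : σ n i * ρ n i = ρ n i * σ n i := by
  have hr : (σw n i * ρw n i * (σw n i)⁻¹ * (ρw n i)⁻¹) ∈ sgRels n :=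
    Set.mem_union_right _ ⟨i, i, Or.inl rfl, rfl⟩
  have h := mk_rel_one hr
  rw [map_mul, map_mul, map_mul, map_inv, map_inv, mk_σw, mk_ρw] at h
  exact commutatorElement_eq_one_iff_mul_comm.mp (by rw [commutatorElement_def]; exact h)

lemma braid_rel (i j : Fin (n-1)) (hij : (j:ℕ) = (i:ℕ)+1) :
    σ n i * σ n j * σ n i = σ n j * σ n i * σ n j := by
  have hr : (σw n i * σw n j * σw n i * (σw n j * σw n i * σw n j)⁻¹) ∈ sgRels n :=
    Set.mem_union_left _ (Set.mem_union_left _ (Set.mem_union_left _ (Set.mem_union_left _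
      (Set.mem_union_right _ ⟨i, j, hij, rfl⟩))))
  have h := mk_rel_one hr
  rw [map_mul, map_mul, map_mul, map_inv, map_mul, map_mul, mk_σw, mk_σw] at h
  exact mul_inv_eq_one.mp h

lemma mixed_rel (i j : Fin (n-1)) (hij : (j:ℕ) = (i:ℕ)+1) :
    ρ n i * σ n j * σ n i = σ n j * σ n i * ρ n j := by
  have hr : (ρw n i * σw n j * σw n i * (σw n j * σw n i * ρw n j)⁻¹) ∈ sgRels n :=
    Set.mem_union_left _ (Set.mem_union_left _ (Set.mem_union_right _ ⟨i, j, hij, rfl⟩))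
  have h := mk_rel_one hr
  rw [map_mul, map_mul, map_mul, map_inv, map_mul, map_mul, mk_σw, mk_σw, mk_ρw, mk_ρw] at h
  exact mul_inv_eq_one.mp h

end SingBraid
namespace SingBraid
variable {n : ℕ}

lemma ab_sigma_succ (i j : Fin (n-1)) (hij : (j:ℕ) = (i:ℕ)+1) :
    Abelianization.of (σ n j) = Abelianization.of (σ n i) := by
  have h := congrArg Abelianization.of (braid_rel i j hij)
  simp only [map_mul] at h
  set a := Abelianization.of (σ n i)
  set b := Abelianization.of (σ n j)
  rw [mul_comm b a] at h
  exact (mul_left_cancel h).symm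

lemma ab_rho_succ (i j : Fin (n-1)) (hij : (j:ℕ) = (i:ℕ)+1) :
    Abelianization.of (ρ n j) = Abelianization.of (ρ n i) := by
  have h := congrArg Abelianization.of (mixed_rel i j hij)
  simp only [map_mul] at h
  set r := Abelianization.of (ρ n i)
  set r' := Abelianization.of (ρ n j)
  set s := Abelianization.of (σ n j)
  set t := Abelianization.of (σ n i)
  have h2 : r * (s * t) = r' * (s * t) := by
    calc r * (s * t) = r * s * t := (mul_assoc _ _ _).symm
      _ = s * t * r' := h
      _ = r' * (s * t) := mul_comm _ _
  exact (mul_right_cancel h2).symm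

lemma ab_sigma (hpos : 0 < n-1) (i : Fin (n-1)) :
    Abelianization.of (σ n i) = Abelianization.of (σ n ⟨0, hpos⟩) := by
  obtain ⟨t, ht⟩ := i
  induction t with
  | zero => rfl
  | succ s ih =>
      have hs : s < n-1 := by omega
      rw [ab_sigma_succ ⟨s, hs⟩ ⟨s+1, ht⟩ rfl, ih hs]

lemma ab_rho (hpos : 0 < n-1) (i : Fin (n-1)) :
    Abelianization.of (ρ n i) = Abelianization.of (ρ n ⟨0, hpos⟩) := by
  obtain ⟨t, ht⟩ := i
  induction t with
  | zero => rfl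
  | succ s ih =>
      have hs : s < n-1 := by omega
      rw [ab_rho_succ ⟨s, hs⟩ ⟨s+1, ht⟩ rfl, ih hs]

/-- The degree homomorphism recording σ-degree and ρ-degree. -/
def degHom (n : ℕ) : SG n →* Multiplicative ℤ × Multiplicative ℤ :=
  PresentedGroup.toGroup (f := Sum.elim (fun _ => ((Multiplicative.ofAdd 1 : Multiplicative ℤ), 1))
    (fun _ => (1, (Multiplicative.ofAdd 1 : Multiplicative ℤ)))) (by
      intro r hr
      simp only [sgRels, Set.mem_union, Set.mem_setOf_eq] at hr
      rcases hr with ((((⟨i,j,_,rfl⟩|⟨i,j,_,rfl⟩)|⟨i,j,_,rfl⟩)|⟨i,j,_,rfl⟩)|⟨i,j,_,rfl⟩)|⟨i,j,_,rfl⟩ <;>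
        simp [σw, ρw, mul_comm, mul_assoc, mul_left_comm])

lemma degHom_σ (i : Fin (n-1)) :
    degHom n (σ n i) = ((Multiplicative.ofAdd 1 : Multiplicative ℤ), 1) :=
  PresentedGroup.toGroup.of _

lemma degHom_ρ (i : Fin (n-1)) :
    degHom n (ρ n i) = (1, (Multiplicative.ofAdd 1 : Multiplicative ℤ)) :=
  PresentedGroup.toGroup.of _

lemma comm_trick {A : Type*} [CommGroup A] (a b : A) (m k : ℤ) :
    a^m * b^k * a * b^(-k) * a⁻¹ * a^(-m) = 1 := by
  have h1 : b^k * a * b^(-k) = a := by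
    rw [mul_comm (b^k) a, mul_assoc, ← zpow_add]
    simp
  calc a^m * b^k * a * b^(-k) * a⁻¹ * a^(-m)
      = a^m * (b^k * a * b^(-k)) * a⁻¹ * a^(-m) := by group
    _ = a^m * a * a⁻¹ * a^(-m) := by rw [h1]
    _ = 1 := by group

end SingBraid
namespace SingBraid
variable {n : ℕ}

/-- The transversal element `T_{m,k} = σ₁^m ρ₁^k`. -/
def Tmk (n : ℕ) (hpos : 0 < n-1) (m k : ℤ) : SG n :=
  σ n ⟨0, hpos⟩ ^ m * ρ n ⟨0, hpos⟩ ^ k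

lemma T_mul (hpos : 0 < n-1) (m k m' k' : ℤ) :
    Tmk n hpos m k * Tmk n hpos m' k' = Tmk n hpos (m+m') (k+k') := by
  have hc : Commute (σ n ⟨0,hpos⟩) (ρ n ⟨0,hpos⟩) := sigma_rho_comm _
  have h2 : ρ n ⟨0,hpos⟩ ^ k * σ n ⟨0,hpos⟩ ^ m' = σ n ⟨0,hpos⟩ ^ m' * ρ n ⟨0,hpos⟩ ^ k :=
    ((hc.zpow_zpow m' k).symm).eq
  simp only [Tmk]
  calc σ n ⟨0,hpos⟩ ^ m * ρ n ⟨0,hpos⟩ ^ k * (σ n ⟨0,hpos⟩ ^ m' * ρ n ⟨0,hpos⟩ ^ k')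
      = σ n ⟨0,hpos⟩ ^ m * (ρ n ⟨0,hpos⟩ ^ k * σ n ⟨0,hpos⟩ ^ m') * ρ n ⟨0,hpos⟩ ^ k' := by group
    _ = σ n ⟨0,hpos⟩ ^ m * (σ n ⟨0,hpos⟩ ^ m' * ρ n ⟨0,hpos⟩ ^ k) * ρ n ⟨0,hpos⟩ ^ k' := by rw [h2]
    _ = σ n ⟨0,hpos⟩ ^ (m+m') * ρ n ⟨0,hpos⟩ ^ (k+k') := by rw [zpow_add, zpow_add]; group

lemma T_inv (hpos : 0 < n-1) (m k : ℤ) :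
    (Tmk n hpos m k)⁻¹ = Tmk n hpos (-m) (-k) :=
  inv_eq_of_mul_eq_one_right (by rw [T_mul]; simp [Tmk])

/-- The generating set of the candidate subgroup. -/
def genSet (n : ℕ) (hpos : 0 < n-1) : Set (SG n) :=
  {x | ∃ m k : ℤ, ∃ i : Fin (n-1), x = alphaElt n hpos m k i ∨ x = betaElt n hpos m k i}

lemma alpha_eq (hpos : 0 < n-1) (m k : ℤ) (i : Fin (n-1)) :
    alphaElt n hpos m k i = Tmk n hpos m k * σ n i * (Tmk n hpos (m+1) k)⁻¹ := by
  simp only [alphaElt, Tmk]; group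

lemma beta_eq (hpos : 0 < n-1) (m k : ℤ) (i : Fin (n-1)) :
    betaElt n hpos m k i = Tmk n hpos m k * ρ n i * (Tmk n hpos m (k+1))⁻¹ := by
  simp only [betaElt, Tmk]; group

lemma alpha_shape_mem (hpos : 0 < n-1) (m k : ℤ) (i : Fin (n-1)) :
    Tmk n hpos m k * σ n i * (Tmk n hpos (m+1) k)⁻¹ ∈ Subgroup.closure (genSet n hpos) :=
  Subgroup.subset_closure ⟨m, k, i, Or.inl (alpha_eq hpos m k i).symm⟩

lemma beta_shape_mem (hpos : 0 < n-1) (m k : ℤ) (i : Fin (n-1)) :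
    Tmk n hpos m k * ρ n i * (Tmk n hpos m (k+1))⁻¹ ∈ Subgroup.closure (genSet n hpos) :=
  Subgroup.subset_closure ⟨m, k, i, Or.inr (beta_eq hpos m k i).symm⟩

lemma conj_mem (hpos : 0 < n-1) {x : SG n} (hx : x ∈ Subgroup.closure (genSet n hpos))
    (m k : ℤ) : Tmk n hpos m k * x * (Tmk n hpos m k)⁻¹ ∈ Subgroup.closure (genSet n hpos) := by
  induction hx using Subgroup.closure_induction with
  | mem y hy =>
      obtain ⟨m', k', i, hy | hy⟩ := hy
      · rw [hy, alpha_eq]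
        have heq : Tmk n hpos m k * (Tmk n hpos m' k' * σ n i * (Tmk n hpos (m'+1) k')⁻¹) *
              (Tmk n hpos m k)⁻¹
            = Tmk n hpos (m+m') (k+k') * σ n i * (Tmk n hpos (m+(m'+1)) (k+k'))⁻¹ := by
          rw [← T_mul, ← T_mul]; group
        rw [heq, show m+(m'+1) = (m+m')+1 from by ring]
        exact alpha_shape_mem hpos _ _ i
      · rw [hy, beta_eq]
        have heq : Tmk n hpos m k * (Tmk n hpos m' k' * ρ n i * (Tmk n hpos m' (k'+1))⁻¹) *
              (Tmk n hpos m k)⁻¹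
            = Tmk n hpos (m+m') (k+k') * ρ n i * (Tmk n hpos (m+m') (k+(k'+1)))⁻¹ := by
          rw [← T_mul, ← T_mul]; group
        rw [heq, show k+(k'+1) = (k+k')+1 from by ring]
        exact beta_shape_mem hpos _ _ i
  | one => simpa using one_mem _
  | mul y z _ _ ihy ihz =>
      have heq : Tmk n hpos m k * (y*z) * (Tmk n hpos m k)⁻¹
          = (Tmk n hpos m k * y * (Tmk n hpos m k)⁻¹) *
            (Tmk n hpos m k * z * (Tmk n hpos m k)⁻¹) := by group
      rw [heq]; exact mul_mem ihy ihz
  | inv y _ ihy =>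
      have heq : Tmk n hpos m k * y⁻¹ * (Tmk n hpos m k)⁻¹
          = (Tmk n hpos m k * y * (Tmk n hpos m k)⁻¹)⁻¹ := by group
      rw [heq]; exact inv_mem ihy

/-- The union of the cosets `H · T_{m,k}`, as a subgroup. -/
def SS (n : ℕ) (hpos : 0 < n-1) : Subgroup (SG n) where
  carrier := {x | ∃ m k : ℤ, x * (Tmk n hpos m k)⁻¹ ∈ Subgroup.closure (genSet n hpos)}
  one_mem' := ⟨0, 0, by simpa [Tmk] using one_mem (Subgroup.closure (genSet n hpos))⟩
  mul_mem' := by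
    rintro x y ⟨m, k, hx⟩ ⟨m', k', hy⟩
    refine ⟨m+m', k+k', ?_⟩
    have heq : x*y*(Tmk n hpos (m+m') (k+k'))⁻¹
        = (x*(Tmk n hpos m k)⁻¹) *
          (Tmk n hpos m k * (y*(Tmk n hpos m' k')⁻¹) * (Tmk n hpos m k)⁻¹) := by
      rw [← T_mul]; group
    rw [heq]; exact mul_mem hx (conj_mem hpos hy m k)
  inv_mem' := by
    rintro x ⟨m, k, hx⟩
    refine ⟨-m, -k, ?_⟩
    have heq : x⁻¹ * (Tmk n hpos (-m) (-k))⁻¹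
        = Tmk n hpos (-m) (-k) * (x * (Tmk n hpos m k)⁻¹)⁻¹ * (Tmk n hpos (-m) (-k))⁻¹ := by
      rw [← T_inv]; group
    rw [heq]; exact conj_mem hpos (inv_mem hx) (-m) (-k)

lemma mem_SS (hpos : 0 < n-1) (x : SG n) : x ∈ SS n hpos := by
  apply PresentedGroup.generated_by
  rintro (i | i)
  · exact ⟨1, 0, by simpa [Tmk, σ] using alpha_shape_mem hpos 0 0 i⟩
  · exact ⟨0, 1, by simpa [Tmk, ρ] using beta_shape_mem hpos 0 0 i⟩

lemma degHom_H_eq_one (hpos : 0 < n-1) {x : SG n}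
    (hx : x ∈ Subgroup.closure (genSet n hpos)) : degHom n x = 1 := by
  have hle : Subgroup.closure (genSet n hpos) ≤ (degHom n).ker := by
    rw [Subgroup.closure_le]
    rintro y ⟨m, k, i, rfl | rfl⟩ <;> simp only [SetLike.mem_coe, MonoidHom.mem_ker]
    · simp only [alphaElt, map_mul, map_zpow, map_inv, degHom_σ, degHom_ρ]
      exact comm_trick _ _ m k
    · simp only [betaElt, map_mul, map_zpow, map_inv, degHom_σ, degHom_ρ]
      group
  exact hle hx

lemma deg_T (hpos : 0 < n-1) (m k : ℤ) :
    degHom n (Tmk n hpos m k) = (Multiplicative.ofAdd m, Multiplicative.ofAdd k) := by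
  simp only [Tmk, map_mul, map_zpow, degHom_σ, degHom_ρ]
  rw [Prod.ext_iff]
  constructor <;> simp [← ofAdd_zsmul]

end SingBraid
open scoped commutatorElement
open SingBraid in
/-- For every `n ≥ 3`, the commutator subgroup of `SG_n` is generated by the elements
`α_{m,k,i}` and `β_{m,k,i}`, for `m, k ∈ ℤ` and `1 ≤ i ≤ n-1`. -/
theorem sg_commutator_eq_closure_alpha_beta (n : ℕ) (hn : 3 ≤ n) :
    Subgroup.closure {x : SG n | ∃ m k : ℤ, ∃ i : Fin (n-1),
        x = alphaElt n (by omega) m k i ∨ x = betaElt n (by omega) m k i}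
      = commutator (SG n) := by
  have hpos : 0 < n - 1 := by omega
  show Subgroup.closure (genSet n hpos) = commutator (SG n)
  apply le_antisymm
  · rw [Subgroup.closure_le]
    rintro x ⟨m, k, i, rfl | rfl⟩
    · show alphaElt n hpos m k i ∈ commutator (SG n)
      have habs : Abelianization.of (alphaElt n hpos m k i) = 1 := by
        simp only [alphaElt, map_mul, map_zpow, map_inv, ab_sigma hpos i]
        exact comm_trick _ _ m k
      exact (QuotientGroup.eq_one_iff _).mp habs
    · show betaElt n hpos m k i ∈ commutator (SG n)
      have habs : Abelianization.of (betaElt n hpos m k i) = 1 := by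
        simp only [betaElt, map_mul, map_zpow, map_inv, ab_rho hpos i]
        group
      exact (QuotientGroup.eq_one_iff _).mp habs
  · rw [commutator_def, Subgroup.commutator_le]
    intro g1 _ g2 _
    obtain ⟨m, k, hw⟩ := mem_SS hpos ⁅g1, g2⁆
    have h1 : degHom n (⁅g1, g2⁆ * (Tmk n hpos m k)⁻¹) = 1 := degHom_H_eq_one hpos hw
    have h2 : degHom n ⁅g1, g2⁆ = 1 := by
      rw [map_commutatorElement]
      exact commutatorElement_eq_one_iff_mul_comm.mpr (mul_comm _ _)
    have h3 : degHom n (Tmk n hpos m k) = 1 := by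
      rw [map_mul, h2, one_mul, map_inv, inv_eq_one] at h1
      exact h1
    rw [deg_T] at h3
    have hmk : m = 0 ∧ k = 0 := by
      rw [Prod.ext_iff] at h3
      exact ⟨by simpa using h3.1, by simpa using h3.2⟩
    obtain ⟨rfl, rfl⟩ := hmk
    have hT : Tmk n hpos 0 0 = 1 := by simp [Tmk]
    rwa [hT, inv_one, mul_one] at hw
end

section
/- There exists a surjective group homomorphism from the commutator subgroup GVB_3' = [GVB_3, GVB_3] of the generalized virtual braid group GVB_3 onto the free group on a countably infinite set (the free group on ℕ). -/
namespace GVB3Aux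

open GenVirtBraid SemidirectProduct Multiplicative
open scoped commutatorElement

abbrev A := Multiplicative ℤ

/-! ### The swap automorphism of `FreeGroup Bool` -/

def bswap : Bool ≃ Bool := ⟨not, not, Bool.not_not, Bool.not_not⟩

def sw : MulAut (FreeGroup Bool) := FreeGroup.freeGroupCongr bswap

lemma sw_of (b : Bool) : sw (FreeGroup.of b) = FreeGroup.of (!b) := by
  simp [sw, bswap]

lemma sw_sw (w : FreeGroup Bool) : sw (sw w) = w := by
  have h : bswap.trans bswap = Equiv.refl Bool := by
    ext b; simp [bswap]
  have h2 : sw.trans sw = MulEquiv.refl _ := by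
    rw [sw, FreeGroup.freeGroupCongr_trans, h, FreeGroup.freeGroupCongr_refl]
  calc sw (sw w) = (sw.trans sw) w := rfl
    _ = w := by rw [h2]; rfl

def actG : A →* MulAut (FreeGroup Bool) := zpowersHom _ sw

abbrev G := FreeGroup Bool ⋊[actG] A

def τ : G := inr (ofAdd 1)
def ξ : G := inl (FreeGroup.of false)

lemma actG_one : actG (ofAdd 1) = sw := by
  simp [actG]

lemma comm_key : (τ * τ) * ξ = ξ * (τ * τ) := by
  have h1 : τ * τ = (inr (ofAdd (1:ℤ) * ofAdd 1) : G) := by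
    rw [map_mul]; rfl
  have h2 := inl_aut (φ := actG) (ofAdd (1:ℤ) * ofAdd 1) (FreeGroup.of false)
  rw [map_inv] at h2
  have h3 : actG (ofAdd (1:ℤ) * ofAdd 1) (FreeGroup.of false) = FreeGroup.of false := by
    rw [map_mul, actG_one, MulAut.mul_apply, sw_of, sw_of, Bool.not_not]
  rw [h1, ξ]
  calc inr (ofAdd (1:ℤ) * ofAdd 1) * inl (FreeGroup.of false)
      = (inr (ofAdd (1:ℤ) * ofAdd 1) * inl (FreeGroup.of false)
          * (inr (ofAdd (1:ℤ) * ofAdd 1))⁻¹) * inr (ofAdd (1:ℤ) * ofAdd 1) := by group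
    _ = inl (FreeGroup.of false) * inr (ofAdd (1:ℤ) * ofAdd 1) := by
        rw [← h2, h3]

/-! ### The homomorphism `Θ : GVB 3 →* G` -/

def targ : Fin (3-1) ⊕ Fin (3-1) → G := Sum.elim (fun _ => τ) (fun _ => ξ)

lemma lift_σw (i : Fin (3-1)) : FreeGroup.lift targ (σw 3 i) = τ := by
  simp [σw, targ]

lemma lift_ρw (i : Fin (3-1)) : FreeGroup.lift targ (ρw 3 i) = ξ := by
  simp [ρw, targ]

lemma relcheck : ∀ r ∈ gvbRels 3, FreeGroup.lift targ r = 1 := by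
  rintro r hr
  rcases hr with ((((((⟨i,j,hij,rfl⟩|⟨i,j,hij,rfl⟩)|⟨i,j,hij,rfl⟩)|⟨i,j,hij,rfl⟩)|
    ⟨i,j,hij,rfl⟩)|⟨i,j,hij,rfl⟩)|⟨i,j,hij,rfl⟩)
  · exact absurd hij (by have := i.isLt; have := j.isLt; omega)
  · simp only [map_mul, map_inv, lift_σw]; group
  · exact absurd hij (by have := i.isLt; have := j.isLt; omega)
  · simp only [map_mul, map_inv, lift_ρw]; group
  · simp only [map_mul, map_inv, lift_σw, lift_ρw]
    rw [mul_inv_eq_one, mul_assoc]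
    exact comm_key.symm
  · simp only [map_mul, map_inv, lift_σw, lift_ρw]
    rw [mul_inv_eq_one, mul_assoc]
    exact comm_key.symm
  · exact absurd hij (by have := i.isLt; have := j.isLt; omega)

def Θ : GVB 3 →* G := PresentedGroup.toGroup relcheck

lemma Θσ (i : Fin (3-1)) : Θ (σ 3 i) = τ := by
  simp [Θ, GenVirtBraid.σ, targ]

lemma Θρ (i : Fin (3-1)) : Θ (ρ 3 i) = ξ := by
  simp [Θ, GenVirtBraid.ρ, targ]

/-! ### Degree homomorphism and invariance -/

def deg : FreeGroup Bool →* A := FreeGroup.lift fun _ => ofAdd 1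

lemma deg_sw (w : FreeGroup Bool) : deg (sw w) = deg w := by
  have h : deg.comp sw.toMonoidHom = deg := by
    refine FreeGroup.ext_hom _ _ fun b => ?_
    simp [deg, sw_of]
  exact DFunLike.congr_fun h w

lemma deg_sw_pow (n : ℤ) (w : FreeGroup Bool) : deg ((sw ^ n) w) = deg w := by
  induction n using Int.induction_on generalizing w with
  | zero => simp
  | succ k ih =>
      rw [zpow_add_one, MulAut.mul_apply, ih, deg_sw]
  | pred k ih =>
      rw [zpow_sub_one, MulAut.mul_apply, ih]
      have : sw (sw⁻¹ w) = w := by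
        rw [← MulAut.mul_apply, mul_inv_cancel, MulAut.one_apply]
      calc deg (sw⁻¹ w) = deg (sw (sw⁻¹ w)) := (deg_sw _).symm
        _ = deg w := by rw [this]

lemma deg_actG (a : A) (w : FreeGroup Bool) : deg (actG a w) = deg w := by
  have : actG a = sw ^ a.toAdd := rfl
  rw [this, deg_sw_pow]

def D : G →* A :=
  SemidirectProduct.lift deg 1 (by
    intro a
    refine FreeGroup.ext_hom _ _ fun b => ?_
    simp only [MonoidHom.comp_apply, MulEquiv.coe_toMonoidHom, MonoidHom.one_apply]
    rw [deg_actG]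
    simp [MulAut.conj_apply])

lemma D_apply (g : G) : D g = deg g.left := by
  have : D g = deg g.left * (1 : A →* A) g.right := rfl
  simpa using this

/-! ### The shift representation `Φ` -/

def shiftE : ℤ ≃ ℤ := Equiv.addRight 1

def sh : MulAut (FreeGroup ℤ) := FreeGroup.freeGroupCongr shiftE

def actH : A →* MulAut (FreeGroup ℤ) := zpowersHom _ sh

abbrev H := FreeGroup ℤ ⋊[actH] A

def t : H := inr (ofAdd 1)
def g0 : FreeGroup ℤ := FreeGroup.of 0

lemma sh_of (m : ℤ) : sh (FreeGroup.of m) = FreeGroup.of (m+1) := by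
  simp [sh, shiftE]

lemma sh_inv_of (m : ℤ) : sh⁻¹ (FreeGroup.of m) = FreeGroup.of (m-1) := by
  have h1 : sh (sh⁻¹ (FreeGroup.of m)) = FreeGroup.of m := by
    rw [← MulAut.mul_apply, mul_inv_cancel, MulAut.one_apply]
  have h2 : sh (FreeGroup.of (m-1)) = FreeGroup.of m := by
    rw [sh_of]; ring_nf
  exact sh.injective (by rw [h1, h2])

lemma sh_pow_of (n : ℤ) (m : ℤ) : (sh ^ n) (FreeGroup.of m) = FreeGroup.of (m + n) := by
  induction n using Int.induction_on generalizing m with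
  | zero => simp
  | succ k ih =>
      rw [zpow_add_one, MulAut.mul_apply, sh_of, ih]
      ring_nf
  | pred k ih =>
      rw [zpow_sub_one, MulAut.mul_apply, sh_inv_of, ih]
      ring_nf

def Φ : FreeGroup Bool →* H :=
  FreeGroup.lift fun b => match b with
    | false => t
    | true => inl g0 * t

lemma Φ_false : Φ (FreeGroup.of false) = t := by simp [Φ]

lemma Φ_true : Φ (FreeGroup.of true) = inl g0 * t := by simp [Φ]

lemma rightHom_Φ (w : FreeGroup Bool) : rightHom (Φ w) = deg w := by
  have h : rightHom.comp Φ = deg := by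
    refine FreeGroup.ext_hom _ _ fun b => ?_
    cases b <;> simp [Φ, deg, t, g0]
  exact DFunLike.congr_fun h w

/-! ### The homomorphism out of the commutator subgroup -/

def e : FreeGroup ℤ ≃* FreeGroup ℕ := FreeGroup.freeGroupCongr (Denumerable.eqv ℤ)

lemma comm_right {x : GVB 3} (hx : x ∈ commutator (GVB 3)) : (Θ x).right = 1 := by
  have h := Abelianization.commutator_subset_ker (rightHom.comp Θ) hx
  rw [MonoidHom.mem_ker] at h
  exact h

lemma comm_deg {x : GVB 3} (hx : x ∈ commutator (GVB 3)) : deg (Θ x).left = 1 := by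
  have h := Abelianization.commutator_subset_ker (D.comp Θ) hx
  rw [MonoidHom.mem_ker] at h
  rw [← D_apply]
  exact h

def fHom : commutator (GVB 3) →* FreeGroup ℕ :=
  MonoidHom.mk' (fun x => e (Φ (Θ (x : GVB 3)).left).left) (by
    intro x y
    have hxr : (Θ (x : GVB 3)).right = 1 := comm_right x.2
    have hxd : deg (Θ (x : GVB 3)).left = 1 := comm_deg x.2
    show e (Φ (Θ ((x : GVB 3) * (y : GVB 3))).left).left
      = e (Φ (Θ (x : GVB 3)).left).left * e (Φ (Θ (y : GVB 3)).left).left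
    have h1 : (Θ ((x : GVB 3) * (y : GVB 3))).left
        = (Θ (x : GVB 3)).left * (Θ (y : GVB 3)).left := by
      rw [map_mul, mul_left, hxr, map_one, MulAut.one_apply]
    have hΦr : (Φ (Θ (x : GVB 3)).left).right = 1 := by
      have : (Φ (Θ (x : GVB 3)).left).right = rightHom (Φ (Θ (x : GVB 3)).left) := rfl
      rw [this, rightHom_Φ, hxd]
    have h2 : (Φ ((Θ (x : GVB 3)).left * (Θ (y : GVB 3)).left)).left
        = (Φ (Θ (x : GVB 3)).left).left * (Φ (Θ (y : GVB 3)).left).left := by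
      rw [map_mul, mul_left, hΦr, map_one, MulAut.one_apply]
    rw [h1, h2, map_mul])

/-! ### Surjectivity -/

def i0 : Fin (3-1) := ⟨0, by norm_num⟩

def cσ : GVB 3 := σ 3 i0
def cρ : GVB 3 := ρ 3 i0

def ck (k : ℤ) : GVB 3 := cρ ^ k * ⁅cσ, cρ⁆ * (cρ ^ k)⁻¹

lemma mem_ck (k : ℤ) : ck k ∈ commutator (GVB 3) := by
  have h : ⁅cσ, cρ⁆ ∈ commutator (GVB 3) := by
    rw [commutator_def]
    exact Subgroup.commutator_mem_commutator (Subgroup.mem_top _) (Subgroup.mem_top _)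
  exact Subgroup.Normal.conj_mem inferInstance _ h _

lemma tau_xi : τ * ξ * τ⁻¹ = inl (FreeGroup.of true) := by
  have h := inl_aut (φ := actG) (ofAdd (1:ℤ)) (FreeGroup.of false)
  rw [map_inv] at h
  have h2 : actG (ofAdd (1:ℤ)) (FreeGroup.of false) = FreeGroup.of true := by
    rw [actG_one, sw_of, Bool.not_false]
  rw [τ, ξ, ← h, h2]

lemma theta_ck (k : ℤ) :
    Θ (ck k) = inl ((FreeGroup.of false) ^ k * FreeGroup.of true
      * (FreeGroup.of false)⁻¹ * ((FreeGroup.of false) ^ k)⁻¹) := by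
  have hσ : Θ cσ = τ := Θσ i0
  have hρ : Θ cρ = ξ := Θρ i0
  have hξk : (ξ : G) ^ k = inl ((FreeGroup.of false) ^ k) := by
    rw [ξ, ← map_zpow]
  have hξi : (ξ : G)⁻¹ = inl ((FreeGroup.of false))⁻¹ := by
    rw [ξ, ← map_inv]
  rw [ck, map_mul, map_mul, map_inv, map_zpow, commutatorElement_def,
    map_mul, map_mul, map_mul, map_inv, map_inv, hσ, hρ, tau_xi, hξi, hξk]
  simp only [← map_inv, ← map_mul]
  congr 1
  group

lemma Phi_word (k : ℤ) :
    Φ ((FreeGroup.of false) ^ k * FreeGroup.of true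
      * (FreeGroup.of false)⁻¹ * ((FreeGroup.of false) ^ k)⁻¹)
    = inl (FreeGroup.of k) := by
  rw [map_mul, map_mul, map_mul, map_inv, map_inv, map_zpow, Φ_false, Φ_true]
  rw [show (t : H) ^ k * (inl g0 * t) * t⁻¹ * ((t:H) ^ k)⁻¹
      = t ^ k * inl g0 * (t ^ k)⁻¹ from by group]
  have htk : (t : H) ^ k = inr (ofAdd k) := by
    rw [t, ← map_zpow]
    congr 1
    rw [← ofAdd_zsmul]
    norm_num
  have h := inl_aut (φ := actH) (ofAdd k) g0
  rw [map_inv] at h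
  have hact : actH (ofAdd k) g0 = FreeGroup.of k := by
    have h2 : actH (ofAdd k) = sh ^ k := by simp [actH]
    rw [h2, g0, sh_pow_of, zero_add]
  rw [htk, ← h, hact]

end GVB3Aux


open GenVirtBraid in
/-- There is a surjective group homomorphism from the commutator subgroup of `GVB_3` onto
the free group on a countably infinite set. -/
theorem gvb3_commutator_surj_onto_free :
    ∃ f : commutator (GVB 3) →* FreeGroup ℕ, Function.Surjective f := by
  refine ⟨GVB3Aux.fHom, ?_⟩
  have key : ∀ n : ℕ, FreeGroup.of n ∈ GVB3Aux.fHom.range := by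
    intro n
    refine ⟨⟨GVB3Aux.ck ((Denumerable.eqv ℤ).symm n), GVB3Aux.mem_ck _⟩, ?_⟩
    show GVB3Aux.e (GVB3Aux.Φ (GVB3Aux.Θ
      (GVB3Aux.ck ((Denumerable.eqv ℤ).symm n))).left).left = FreeGroup.of n
    rw [GVB3Aux.theta_ck, SemidirectProduct.left_inl, GVB3Aux.Phi_word,
      SemidirectProduct.left_inl]
    simp [GVB3Aux.e, FreeGroup.map.of]
  have hle : Subgroup.closure (Set.range (FreeGroup.of : ℕ → FreeGroup ℕ))
      ≤ GVB3Aux.fHom.range :=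
    (Subgroup.closure_le _).2 (by rintro _ ⟨n, rfl⟩; exact key n)
  rw [FreeGroup.closure_range_of] at hle
  exact MonoidHom.range_eq_top.1 (top_le_iff.1 hle)
end
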